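/- arXiv:1309.1040 — 6 statements merged into one kernel-verified Lean document; each statement's English description precedes it below -/
import Mathlib

section
/- Let u, u' be vectors of ±1s of length n and v, v' be vectors of ±1s of length m, and let A = [a_{ij}] be an m×n (0,±1)-matrix that is a (u,u'|v,v')-ASM. Then r⁻_m(v,v') − r⁺_m(v,v') = c⁻_n(u,u') − c⁺_n(u,u'), i.e., the number of indices i with v_i = v'_i = −1 minus the number with v_i = v'_i = +1 equals the number of indices j with u_j = u'_j = −1 minus the number with u_j = u'_j = +1. -/
/-- The nonzero entries of a list of integers alternate in sign. -/
def AltList (l : List ℤ) : Prop :=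
  List.Chain' (fun x y => x * y = -1) (l.filter (· ≠ 0))

/-- A vector of ±1s. -/
def SignVec {p : ℕ} (w : Fin p → ℤ) : Prop := ∀ i, w i = 1 ∨ w i = -1

/-- `A` is a (u,u'|v,v')-ASM: a (0,±1)-matrix such that in the bordered matrix
(u on top, u' on bottom, v on the left, v' on the right, zeros in corners)
the nonzero entries of each interior row and column alternate in sign. -/
def IsGASM {m n : ℕ} (u u' : Fin n → ℤ) (v v' : Fin m → ℤ)
    (A : Matrix (Fin m) (Fin n) ℤ) : Prop :=
  (∀ i j, A i j = 0 ∨ A i j = 1 ∨ A i j = -1) ∧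
  (∀ i : Fin m, AltList (v i :: (List.ofFn fun j => A i j) ++ [v' i])) ∧
  (∀ j : Fin n, AltList (u j :: (List.ofFn fun i => A i j) ++ [u' j]))

/-- Ordinary alternating sign matrix, via the bordered formulation with all borders −1. -/
def IsASM {n : ℕ} (A : Matrix (Fin n) (Fin n) ℤ) : Prop :=
  IsGASM (fun _ => -1) (fun _ => -1) (fun _ => -1) (fun _ => -1) A



lemma alt_cases : ∀ (L : List ℤ) (a : ℤ), (a = 1 ∨ a = -1) →
    List.Chain' (fun x y => x * y = -1) (a :: L) →
    ((a :: L).getLast (List.cons_ne_nil _ _) = a ∧ (a :: L).sum = a) ∨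
    ((a :: L).getLast (List.cons_ne_nil _ _) = -a ∧ (a :: L).sum = 0) := by
  intro L
  induction L with
  | nil => intro a ha _; left; simp
  | cons b L ih =>
    intro a ha hc
    rw [List.Chain', List.isChain_cons_cons] at hc
    obtain ⟨hab, hc⟩ := hc
    have hb : b = -a := by rcases ha with h | h <;> subst h <;> linarith
    have hb' : b = 1 ∨ b = -1 := by rcases ha with h | h <;> subst h <;> simp [hb]
    rcases ih b hb' hc with ⟨h1, h2⟩ | ⟨h1, h2⟩
    · right
      constructor
      · rw [List.getLast_cons (List.cons_ne_nil _ _)]; rw [h1, hb]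
      · simp [List.sum_cons] at h2 ⊢; rw [h2, hb]; ring
    · left
      constructor
      · rw [List.getLast_cons (List.cons_ne_nil _ _)]; rw [h1, hb]; ring
      · simp [List.sum_cons] at h2 ⊢; linarith

lemma filter_sum (l : List ℤ) : (l.filter (· ≠ 0)).sum = l.sum := by
  induction l with
  | nil => simp
  | cons a l ih =>
    simp only [ne_eq, decide_not] at ih
    by_cases h : a = 0
    · simp [h, List.filter_cons, ne_eq, ih]
    · simp [List.filter_cons, h, ne_eq, ih]

lemma rowSum (a b : ℤ) (l : List ℤ) (ha : a = 1 ∨ a = -1) (hb : b = 1 ∨ b = -1)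
    (h : AltList (a :: l ++ [b])) : l.sum = if a = b then -a else 0 := by
  have ha0 : a ≠ 0 := by rcases ha with h' | h' <;> simp [h']
  have hb0 : b ≠ 0 := by rcases hb with h' | h' <;> simp [h']
  unfold AltList at h
  have hf : (a :: l ++ [b]).filter (· ≠ 0) = a :: ((l.filter (· ≠ 0)) ++ [b]) := by
    simp [List.filter_cons, List.filter_append, ha0, hb0]
  rw [hf] at h
  have hlast : (a :: ((l.filter (· ≠ 0)) ++ [b])).getLast (List.cons_ne_nil _ _) = b := by
    simp
  have hsum : (a :: ((l.filter (· ≠ 0)) ++ [b])).sum = a + l.sum + b := by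
    simp only [List.sum_cons, List.sum_append, List.sum_singleton, List.sum_nil, filter_sum]
    ring
  rcases alt_cases _ a ha h with ⟨h1, h2⟩ | ⟨h1, h2⟩
  · rw [hlast] at h1
    rw [hsum] at h2
    rw [if_pos h1.symm]
    rw [← h1] at h2; linarith
  · rw [hlast] at h1
    rw [hsum] at h2
    have : a ≠ b := by rcases ha with h' | h' <;> subst h' <;> simp [h1]
    rw [if_neg this]
    rw [h1] at h2; linarith


theorem stmt1 {m n : ℕ} (u u' : Fin n → ℤ) (v v' : Fin m → ℤ)
    (hu : SignVec u) (hu' : SignVec u') (hv : SignVec v) (hv' : SignVec v')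
    (A : Matrix (Fin m) (Fin n) ℤ) (hA : IsGASM u u' v v' A) :
    ((Finset.univ.filter fun i : Fin m => v i = -1 ∧ v' i = -1).card : ℤ) -
      ((Finset.univ.filter fun i : Fin m => v i = 1 ∧ v' i = 1).card : ℤ) =
    ((Finset.univ.filter fun j : Fin n => u j = -1 ∧ u' j = -1).card : ℤ) -
      ((Finset.univ.filter fun j : Fin n => u j = 1 ∧ u' j = 1).card : ℤ) := by
  obtain ⟨h0, hrow, hcol⟩ := hA
  have hrowsum : ∀ i, ∑ j, A i j = if v i = v' i then -(v i) else 0 := by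
    intro i
    have := rowSum (v i) (v' i) (List.ofFn fun j => A i j) (hv i) (hv' i) (hrow i)
    rwa [List.sum_ofFn] at this
  have hcolsum : ∀ j, ∑ i, A i j = if u j = u' j then -(u j) else 0 := by
    intro j
    have := rowSum (u j) (u' j) (List.ofFn fun i => A i j) (hu j) (hu' j) (hcol j)
    rwa [List.sum_ofFn] at this
  have key : ∀ (p : ℕ) (w w' : Fin p → ℤ), SignVec w → SignVec w' →
      ∑ i, (if w i = w' i then -(w i) else 0) =
        ((Finset.univ.filter fun i => w i = -1 ∧ w' i = -1).card : ℤ) -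
        ((Finset.univ.filter fun i => w i = 1 ∧ w' i = 1).card : ℤ) := by
    intro p w w' hw hw'
    rw [← Finset.sum_boole, ← Finset.sum_boole, ← Finset.sum_sub_distrib]
    apply Finset.sum_congr rfl
    intro i _
    rcases hw i with h1 | h1 <;> rcases hw' i with h2 | h2 <;> simp [h1, h2]
  rw [← key m v v' hv hv', ← key n u u' hu hu']
  calc (∑ i, if v i = v' i then -(v i) else 0)
      = ∑ i, ∑ j, A i j := Finset.sum_congr rfl fun i _ => (hrowsum i).symm
    _ = ∑ j, ∑ i, A i j := Finset.sum_comm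
    _ = _ := Finset.sum_congr rfl fun j _ => hcolsum j
end

section
/- Let u, u' be ±1-vectors of length n and v, v' be ±1-vectors of length m. A (u,u'|v,v')-ASM exists if and only if all three conditions hold: (1) r⁻_m(v,v') − r⁺_m(v,v') = c⁻_n(u,u') − c⁺_n(u,u'); (2) −u⁺ ≤ r⁻_k(v,v') − r⁺_k(v,v') ≤ u⁻ for all k = 1,…,m; (3) −v⁺ ≤ c⁻_l(u,u') − c⁺_l(u,u') ≤ v⁻ for all l = 1,…,n. -/
namespace GASMAux


def sg (a b : ℤ) : ℤ := if a = b then -a else 0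

lemma sg_mem (a b : ℤ) : sg a b = 0 ∨ sg a b = -a := by
  unfold sg; split <;> simp

lemma alt_iff : ∀ (l : List ℤ) (a b : ℤ), (a = 1 ∨ a = -1) → (b = 1 ∨ b = -1) →
    (List.Chain' (fun x y : ℤ => x * y = -1) (a :: l.filter (· ≠ 0) ++ [b]) ↔
      (∀ k, (l.take k).sum = 0 ∨ (l.take k).sum = -a) ∧ l.sum = sg a b) := by
  intro l
  induction l with
  | nil =>
      intro a b ha hb
      simp only [List.filter_nil, List.nil_append, List.take_nil, List.sum_nil,
        List.cons_append]
      rw [List.Chain', List.isChain_pair]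
      constructor
      · intro h
        refine ⟨fun k => by simp, ?_⟩
        unfold sg; rcases ha with ha|ha <;> rcases hb with hb|hb <;> subst ha <;> subst hb <;> omega
      · rintro ⟨-, h⟩
        unfold sg at h
        rcases ha with ha|ha <;> rcases hb with hb|hb <;> subst ha <;> subst hb <;> simp_all <;> omega
  | cons x t ih =>
      intro a b ha hb
      simp only [List.cons_append] at ih
      by_cases hx : x = 0
      · subst hx
        have hfil : (List.filter (· ≠ 0) (0 :: t)) = t.filter (· ≠ 0) := by simp
        simp only [List.cons_append] at *
        rw [hfil, ih a b ha hb]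
        constructor
        · rintro ⟨h1, h2⟩
          refine ⟨fun k => ?_, by simpa using h2⟩
          cases k with
          | zero => exact Or.inl rfl
          | succ k => simpa using h1 k
        · rintro ⟨h1, h2⟩
          exact ⟨fun k => by simpa using h1 (k+1), by simpa using h2⟩
      · have hfil : (List.filter (· ≠ 0) (x :: t)) = x :: t.filter (· ≠ 0) := by
          simp [hx]
        rw [hfil]
        simp only [List.cons_append]
        rw [show ∀ (R : ℤ → ℤ → Prop) (a b : ℤ) (l : List ℤ), List.Chain' R (a :: b :: l) ↔ R a b ∧ List.Chain' R (b :: l) from fun _ _ _ _ => List.isChain_cons_cons]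
        constructor
        · rintro ⟨hax, hc⟩
          have hxa : x = -a := by rcases ha with ha|ha <;> subst ha <;> omega
          subst hxa
          have hna : (-a = 1 ∨ -a = -1) := by omega
          rw [ih (-a) b hna hb] at hc
          obtain ⟨h1, h2⟩ := hc
          constructor
          · intro k
            cases k with
            | zero => exact Or.inl rfl
            | succ k =>
                simp only [List.take_succ_cons, List.sum_cons]
                rcases h1 k with h|h <;> omega
          · simp only [List.sum_cons, h2]
            unfold sg
            rcases ha with ha|ha <;> rcases hb with hb|hb <;> subst ha <;> subst hb <;> simp <;> omega
        · rintro ⟨h1, h2⟩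
          have hxa : x = -a := by
            have := h1 1
            simp only [List.take_succ_cons, List.take_zero, List.sum_cons, List.sum_nil] at this
            omega
          subst hxa
          have hna : (-a = 1 ∨ -a = -1) := by omega
          refine ⟨by rcases ha with ha|ha <;> subst ha <;> ring, ?_⟩
          rw [ih (-a) b hna hb]
          constructor
          · intro k
            have := h1 (k+1)
            simp only [List.take_succ_cons, List.sum_cons] at this
            omega
          · simp only [List.sum_cons] at h2
            unfold sg at h2 ⊢
            rcases ha with ha|ha <;> rcases hb with hb|hb <;> subst ha <;> subst hb <;> simp_all <;> omega

/-- extend a `Fin p`-indexed vector by zero -/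
def exf {p : ℕ} (f : Fin p → ℤ) : ℕ → ℤ := fun i => if h : i < p then f ⟨i, h⟩ else 0

lemma exf_lt {p : ℕ} (f : Fin p → ℤ) {i : ℕ} (h : i < p) : exf f i = f ⟨i, h⟩ := dif_pos h

lemma exf_ge {p : ℕ} (f : Fin p → ℤ) {i : ℕ} (h : p ≤ i) : exf f i = 0 := dif_neg (by omega)

def S2 {p : ℕ} (w w' : Fin p → ℤ) (k : ℕ) : ℤ :=
  ∑ i ∈ Finset.range k, exf (fun i => sg (w i) (w' i)) i

def cP {p : ℕ} (w : Fin p → ℤ) (k : ℕ) : ℤ :=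
  ∑ i ∈ Finset.range k, exf (fun i => if w i = 1 then 1 else 0) i

def cM {p : ℕ} (w : Fin p → ℤ) (k : ℕ) : ℤ :=
  ∑ i ∈ Finset.range k, exf (fun i => if w i = -1 then 1 else 0) i

lemma sum_range_stable {p k : ℕ} (g : ℕ → ℤ) (hgz : ∀ i, p ≤ i → g i = 0) (hk : p ≤ k) :
    ∑ i ∈ Finset.range k, g i = ∑ i ∈ Finset.range p, g i :=
  (Finset.sum_subset (Finset.range_subset_range.mpr hk)
    (fun x _ hx => hgz x (by simpa [Finset.mem_range, not_lt] using hx))).symm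

lemma sum_range_le_stable {p : ℕ} (g : ℕ → ℤ) (hg0 : ∀ i, 0 ≤ g i)
    (hgz : ∀ i, p ≤ i → g i = 0) (k : ℕ) :
    ∑ i ∈ Finset.range k, g i ≤ ∑ i ∈ Finset.range p, g i := by
  rcases le_total k p with h | h
  · exact Finset.sum_le_sum_of_subset_of_nonneg (Finset.range_subset_range.mpr h)
      (fun i _ _ => hg0 i)
  · exact le_of_eq (sum_range_stable g hgz h)

lemma sum_if_lt (f : ℕ → ℤ) (k n : ℕ) :
    ∑ i ∈ Finset.range n, (if i < k then f i else 0) = ∑ i ∈ Finset.range (min k n), f i := by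
  rw [← Finset.sum_filter]
  congr 1
  ext i
  simp only [Finset.mem_filter, Finset.mem_range, Nat.lt_min]
  tauto

lemma sum_range_min {p : ℕ} (g : ℕ → ℤ) (hgz : ∀ i, p ≤ i → g i = 0) (k : ℕ) :
    ∑ i ∈ Finset.range (min k p), g i = ∑ i ∈ Finset.range k, g i := by
  rcases le_total k p with h | h
  · rw [min_eq_left h]
  · rw [min_eq_right h, sum_range_stable g hgz h]

lemma exf_zero {p : ℕ} (f : Fin p → ℤ) : ∀ i, p ≤ i → exf f i = 0 := fun _ h => exf_ge _ h

lemma ind_nonneg {p : ℕ} (w : Fin p → ℤ) (c : ℤ) (i : ℕ) :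
    0 ≤ exf (fun i => if w i = c then 1 else 0) i := by
  by_cases h : i < p
  · rw [exf_lt _ h]; split <;> norm_num
  · rw [exf_ge _ (le_of_not_gt h)]

lemma fin_filter_sum {p : ℕ} (f : Fin p → ℤ) (k : ℕ) :
    ∑ i ∈ Finset.univ.filter (fun i : Fin p => (i : ℕ) < k), f i
      = ∑ i ∈ Finset.range k, exf f i := by
  calc ∑ i ∈ Finset.univ.filter (fun i : Fin p => (i : ℕ) < k), f i
      = ∑ i : Fin p, (if (i : ℕ) < k then exf f (i : ℕ) else 0) := by
        rw [Finset.sum_filter]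
        exact Finset.sum_congr rfl (fun i _ => by rw [exf_lt f i.isLt, Fin.eta])
    _ = ∑ i ∈ Finset.range p, (if i < k then exf f i else 0) :=
        Fin.sum_univ_eq_sum_range (fun j => if j < k then exf f j else 0) p
    _ = ∑ i ∈ Finset.range (min k p), exf f i := sum_if_lt _ _ _
    _ = ∑ i ∈ Finset.range k, exf f i := sum_range_min (exf f) (exf_zero f) k

lemma fin_sum {p : ℕ} (f : Fin p → ℤ) :
    ∑ i, f i = ∑ i ∈ Finset.range p, exf f i := by
  have := fin_filter_sum f p
  simpa [Fin.isLt] using this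

-- nonnegativity / stability of counters
lemma cP_nonneg {p : ℕ} (w : Fin p → ℤ) (k : ℕ) : 0 ≤ cP w k :=
  Finset.sum_nonneg (fun i _ => ind_nonneg w 1 i)

lemma cM_nonneg {p : ℕ} (w : Fin p → ℤ) (k : ℕ) : 0 ≤ cM w k :=
  Finset.sum_nonneg (fun i _ => ind_nonneg w (-1) i)

lemma cP_le {p : ℕ} (w : Fin p → ℤ) (k : ℕ) : cP w k ≤ cP w p :=
  sum_range_le_stable _ (ind_nonneg w 1) (exf_zero _) k

lemma cM_le {p : ℕ} (w : Fin p → ℤ) (k : ℕ) : cM w k ≤ cM w p :=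
  sum_range_le_stable _ (ind_nonneg w (-1)) (exf_zero _) k

lemma S2_stable {p : ℕ} (w w' : Fin p → ℤ) {k : ℕ} (hk : p ≤ k) : S2 w w' k = S2 w w' p :=
  sum_range_stable _ (exf_zero _) hk

lemma sg_bounds {p : ℕ} (w w' : Fin p → ℤ) (hw : SignVec w) (i : ℕ) :
    -(exf (fun i => if w i = 1 then 1 else 0) i) ≤ exf (fun i => sg (w i) (w' i)) i ∧
    exf (fun i => sg (w i) (w' i)) i ≤ exf (fun i => if w i = -1 then 1 else 0) i := by
  by_cases hip : i < p
  · rw [exf_lt _ hip, exf_lt _ hip, exf_lt _ hip]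
    rcases hw ⟨i, hip⟩ with h | h <;> simp only [h, sg] <;> norm_num <;> split <;> norm_num
  · rw [exf_ge _ (le_of_not_gt hip), exf_ge _ (le_of_not_gt hip), exf_ge _ (le_of_not_gt hip)]
    norm_num

lemma S2_ge {p : ℕ} (w w' : Fin p → ℤ) (hw : SignVec w) (k : ℕ) :
    -(cP w k) ≤ S2 w w' k := by
  unfold S2 cP
  rw [← Finset.sum_neg_distrib]
  apply Finset.sum_le_sum
  exact fun i _ => (sg_bounds w w' hw i).1

lemma S2_le {p : ℕ} (w w' : Fin p → ℤ) (hw : SignVec w) (k : ℕ) :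
    S2 w w' k ≤ cM w k := by
  unfold S2 cM
  apply Finset.sum_le_sum
  exact fun i _ => (sg_bounds w w' hw i).2

lemma S2_diff {p : ℕ} (w w' : Fin p → ℤ) (hw : SignVec w) (k : ℕ) :
    S2 w w' p - S2 w w' k ≤ cM w p - cM w k := by
  rcases le_total k p with h | h
  · unfold S2 cM
    rw [← Finset.sum_Ico_eq_sub _ h, ← Finset.sum_Ico_eq_sub _ h]
    apply Finset.sum_le_sum
    exact fun i _ => (sg_bounds w w' hw i).2
  · rw [S2_stable w w' h]
    have h2 : cM w k = cM w p := sum_range_stable _ (exf_zero _) h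
    omega


lemma max_step {x x' y y' d : ℤ} (hx : x' = x ∨ x' = x + d) (hy : y' = y ∨ y' = y + d)
    (hd : d = 1 ∨ d = -1) : max x' y' = max x y ∨ max x' y' = max x y + d := by
  rcases max_cases x y with ⟨h1, h2⟩ | ⟨h1, h2⟩ <;>
    rcases max_cases x' y' with ⟨h3, h4⟩ | ⟨h3, h4⟩ <;> omega

lemma max4_eq {a b c d t : ℤ} (ha : a ≤ t) (hb : b ≤ t) (hc : c ≤ t) (hd : d ≤ t)
    (h : a = t ∨ b = t ∨ c = t ∨ d = t) : max (max a b) (max c d) = t := by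
  rcases max_cases a b with ⟨h1, h2⟩ | ⟨h1, h2⟩ <;> rcases max_cases c d with ⟨h3, h4⟩ | ⟨h3, h4⟩ <;>
    rcases max_cases (max a b) (max c d) with ⟨h5, h6⟩ | ⟨h5, h6⟩ <;> omega

section Height

variable {m n : ℕ} (u u' : Fin n → ℤ) (v v' : Fin m → ℤ)

def HH (k l : ℕ) : ℤ :=
  max (max (-(cP u l)) (S2 v v' k - cM u n + cM u l))
      (max (-(cP v k)) (S2 u u' l - cM v m + cM v k))

lemma hstep (hu : SignVec u) (k l : ℕ) (hl : l < n) :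
    HH u u' v v' k (l + 1) = HH u u' v v' k l ∨
    HH u u' v v' k (l + 1) = HH u u' v v' k l + (-(u ⟨l, hl⟩)) := by
  have hd : (-(u ⟨l, hl⟩) = 1 ∨ -(u ⟨l, hl⟩) = -1) := by rcases hu ⟨l, hl⟩ with h | h <;> omega
  have e1 : cP u (l + 1) = cP u l + (if u ⟨l, hl⟩ = 1 then 1 else 0) := by
    unfold cP; rw [Finset.sum_range_succ, exf_lt _ hl]
  have e2 : cM u (l + 1) = cM u l + (if u ⟨l, hl⟩ = -1 then 1 else 0) := by
    unfold cM; rw [Finset.sum_range_succ, exf_lt _ hl]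
  have e3 : S2 u u' (l + 1) = S2 u u' l + sg (u ⟨l, hl⟩) (u' ⟨l, hl⟩) := by
    unfold S2; rw [Finset.sum_range_succ, exf_lt _ hl]
  have e4 := sg_mem (u ⟨l, hl⟩) (u' ⟨l, hl⟩)
  unfold HH
  apply max_step _ _ hd
  · apply max_step _ _ hd
    · rcases hu ⟨l, hl⟩ with h | h <;> rw [h] at e1 ⊢ <;> simp at e1 <;> omega
    · rcases hu ⟨l, hl⟩ with h | h <;> rw [h] at e2 ⊢ <;> simp at e2 <;> omega
  · apply max_step _ _ hd
    · exact Or.inl rfl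
    · omega

lemma vstep (hv : SignVec v) (k l : ℕ) (hk : k < m) :
    HH u u' v v' (k + 1) l = HH u u' v v' k l ∨
    HH u u' v v' (k + 1) l = HH u u' v v' k l + (-(v ⟨k, hk⟩)) := by
  have hd : (-(v ⟨k, hk⟩) = 1 ∨ -(v ⟨k, hk⟩) = -1) := by rcases hv ⟨k, hk⟩ with h | h <;> omega
  have e1 : cP v (k + 1) = cP v k + (if v ⟨k, hk⟩ = 1 then 1 else 0) := by
    unfold cP; rw [Finset.sum_range_succ, exf_lt _ hk]
  have e2 : cM v (k + 1) = cM v k + (if v ⟨k, hk⟩ = -1 then 1 else 0) := by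
    unfold cM; rw [Finset.sum_range_succ, exf_lt _ hk]
  have e3 : S2 v v' (k + 1) = S2 v v' k + sg (v ⟨k, hk⟩) (v' ⟨k, hk⟩) := by
    unfold S2; rw [Finset.sum_range_succ, exf_lt _ hk]
  have e4 := sg_mem (v ⟨k, hk⟩) (v' ⟨k, hk⟩)
  unfold HH
  apply max_step _ _ hd
  · apply max_step _ _ hd
    · exact Or.inl rfl
    · omega
  · apply max_step _ _ hd
    · rcases hv ⟨k, hk⟩ with h | h <;> rw [h] at e1 ⊢ <;> simp at e1 <;> omega
    · rcases hv ⟨k, hk⟩ with h | h <;> rw [h] at e2 ⊢ <;> simp at e2 <;> omega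

variable (hu : SignVec u) (hv : SignVec v)
variable (hC1 : S2 v v' m = S2 u u' n)
variable (hC2 : ∀ k, -(cP u n) ≤ S2 v v' k ∧ S2 v v' k ≤ cM u n)
variable (hC3 : ∀ l, -(cP v m) ≤ S2 u u' l ∧ S2 u u' l ≤ cM v m)

include hC2 in
lemma Hk0 (k : ℕ) : HH u u' v v' k 0 = 0 := by
  unfold HH
  have h1 : cP u 0 = 0 := Finset.sum_range_zero _
  have h2 : cM u 0 = 0 := Finset.sum_range_zero _
  have h3 : S2 u u' 0 = 0 := Finset.sum_range_zero _
  apply max4_eq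
  · omega
  · have := (hC2 k).2; omega
  · have := cP_nonneg v k; omega
  · have := cM_le v k; omega
  · left; omega

include hC3 in
lemma H0l (l : ℕ) : HH u u' v v' 0 l = 0 := by
  unfold HH
  have h1 : cP v 0 = 0 := Finset.sum_range_zero _
  have h2 : cM v 0 = 0 := Finset.sum_range_zero _
  have h3 : S2 v v' 0 = 0 := Finset.sum_range_zero _
  apply max4_eq
  · have := cP_nonneg u l; omega
  · have := cM_le u l; omega
  · omega
  · have := (hC3 l).2; omega
  · right; right; left; omega

include hv hC1 hC2 in
lemma Hkn (k : ℕ) : HH u u' v v' k n = S2 v v' k := by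
  unfold HH
  apply max4_eq
  · exact (hC2 k).1
  · omega
  · exact S2_ge v v' hv k
  · have := S2_diff v v' hv k; omega
  · right; left; omega

include hu hC1 hC3 in
lemma Hml (l : ℕ) : HH u u' v v' m l = S2 u u' l := by
  unfold HH
  apply max4_eq
  · exact S2_ge u u' hu l
  · have := S2_diff u u' hu l; omega
  · exact (hC3 l).1
  · omega
  · right; right; right; omega

end Height


section Exist

variable {m n : ℕ} (u u' : Fin n → ℤ) (v v' : Fin m → ℤ)

def AN (i j : ℕ) : ℤ :=
  HH u u' v v' (i + 1) (j + 1) + HH u u' v v' i j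
    - HH u u' v v' i (j + 1) - HH u u' v v' (i + 1) j

variable (hu : SignVec u) (hu' : SignVec u') (hv : SignVec v) (hv' : SignVec v')
variable (hC1 : S2 v v' m = S2 u u' n)
variable (hC2 : ∀ k, -(cP u n) ≤ S2 v v' k ∧ S2 v v' k ≤ cM u n)
variable (hC3 : ∀ l, -(cP v m) ≤ S2 u u' l ∧ S2 u u' l ≤ cM v m)

include hC2 in
lemma tele_row (i l : ℕ) :
    ∑ j ∈ Finset.range l, AN u u' v v' i j
      = HH u u' v v' (i + 1) l - HH u u' v v' i l := by
  induction l with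
  | zero => rw [Finset.sum_range_zero, Hk0 u u' v v' hC2, Hk0 u u' v v' hC2]; ring
  | succ l ih => rw [Finset.sum_range_succ, ih]; unfold AN; ring

include hC3 in
lemma tele_col (k j : ℕ) :
    ∑ i ∈ Finset.range k, AN u u' v v' i j
      = HH u u' v v' k (j + 1) - HH u u' v v' k j := by
  induction k with
  | zero => rw [Finset.sum_range_zero, H0l u u' v v' hC3, H0l u u' v v' hC3]; ring
  | succ k ih => rw [Finset.sum_range_succ, ih]; unfold AN; ring

end Exist

lemma row_iff {p : ℕ} (a b : ℤ) (ha : a = 1 ∨ a = -1) (hb : b = 1 ∨ b = -1) (f : Fin p → ℤ) :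
    AltList (a :: (List.ofFn f) ++ [b]) ↔
      (∀ k, (∑ j ∈ Finset.univ.filter (fun j : Fin p => (j : ℕ) < k), f j) = 0 ∨
            (∑ j ∈ Finset.univ.filter (fun j : Fin p => (j : ℕ) < k), f j) = -a) ∧
      (∑ j, f j) = sg a b := by
  have ha0 : a ≠ 0 := by rcases ha with h | h <;> simp [h]
  have hb0 : b ≠ 0 := by rcases hb with h | h <;> simp [h]
  unfold AltList
  have hfil : (a :: (List.ofFn f) ++ [b]).filter (· ≠ 0)
      = a :: (List.ofFn f).filter (· ≠ 0) ++ [b] := by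
    simp [List.filter_cons, List.filter_append, ha0, hb0]
  rw [hfil, alt_iff (List.ofFn f) a b ha hb]
  have htake : ∀ k : ℕ, ((List.ofFn f).take k).sum
      = ∑ j ∈ Finset.univ.filter (fun j : Fin p => (j : ℕ) < k), f j := by
    intro k; exact List.sum_take_ofFn f k
  have hsum : (List.ofFn f).sum = ∑ j, f j := List.sum_ofFn
  rw [hsum]
  constructor
  · rintro ⟨h1, h2⟩
    exact ⟨fun k => by rw [← htake k]; exact h1 k, h2⟩
  · rintro ⟨h1, h2⟩
    exact ⟨fun k => by rw [htake k]; exact h1 k, h2⟩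


section Exist2

variable {m n : ℕ} (u u' : Fin n → ℤ) (v v' : Fin m → ℤ)

lemma exists_gasm (hu : SignVec u) (hu' : SignVec u') (hv : SignVec v) (hv' : SignVec v')
    (hC1 : S2 v v' m = S2 u u' n)
    (hC2 : ∀ k, -(cP u n) ≤ S2 v v' k ∧ S2 v v' k ≤ cM u n)
    (hC3 : ∀ l, -(cP v m) ≤ S2 u u' l ∧ S2 u u' l ≤ cM v m) :
    ∃ A : Matrix (Fin m) (Fin n) ℤ, IsGASM u u' v v' A := by
  refine ⟨fun i j => AN u u' v v' ↑i ↑j, ?_, ?_, ?_⟩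
  · intro i j
    have h1 := vstep u u' v v' hv ↑i (↑j + 1) i.isLt
    have h2 := vstep u u' v v' hv ↑i ↑j i.isLt
    simp only [Fin.eta] at h1 h2
    show AN u u' v v' ↑i ↑j = 0 ∨ AN u u' v v' ↑i ↑j = 1 ∨ AN u u' v v' ↑i ↑j = -1
    unfold AN
    rcases hv i with h | h <;> rw [h] at h1 h2 <;> omega
  · intro i
    have key : ∀ l : ℕ, ∑ j ∈ Finset.range l, exf (fun j : Fin n => AN u u' v v' ↑i ↑j) j
        = HH u u' v v' (↑i + 1) (min l n) - HH u u' v v' ↑i (min l n) := by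
      intro l
      rw [← sum_range_min (exf (fun j : Fin n => AN u u' v v' ↑i ↑j)) (exf_zero _) l]
      have e : ∀ jn ∈ Finset.range (min l n),
          exf (fun j : Fin n => AN u u' v v' ↑i ↑j) jn = AN u u' v v' ↑i jn := fun jn hj => by
        rw [exf_lt _ (lt_of_lt_of_le (Finset.mem_range.mp hj) (min_le_right l n))]
      rw [Finset.sum_congr rfl e, tele_row u u' v v' hC2 ↑i (min l n)]
    refine (row_iff (v i) (v' i) (hv i) (hv' i) (fun j => AN u u' v v' ↑i ↑j)).mpr ⟨?_, ?_⟩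
    · intro k
      rw [fin_filter_sum (fun j : Fin n => AN u u' v v' ↑i ↑j) k, key k]
      have h1 := vstep u u' v v' hv ↑i (min k n) i.isLt
      simp only [Fin.eta] at h1
      omega
    · rw [fin_sum (fun j : Fin n => AN u u' v v' ↑i ↑j)]
      have hk := key n
      rw [min_self] at hk
      rw [hk, Hkn u u' v v' hv hC1 hC2 (↑i + 1), Hkn u u' v v' hv hC1 hC2 ↑i]
      have e : S2 v v' (↑i + 1) = S2 v v' ↑i + sg (v i) (v' i) := by
        unfold S2; rw [Finset.sum_range_succ, exf_lt _ i.isLt]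
      omega
  · intro j
    have key : ∀ k : ℕ, ∑ i ∈ Finset.range k, exf (fun i : Fin m => AN u u' v v' ↑i ↑j) i
        = HH u u' v v' (min k m) (↑j + 1) - HH u u' v v' (min k m) ↑j := by
      intro k
      rw [← sum_range_min (exf (fun i : Fin m => AN u u' v v' ↑i ↑j)) (exf_zero _) k]
      have e : ∀ im ∈ Finset.range (min k m),
          exf (fun i : Fin m => AN u u' v v' ↑i ↑j) im = AN u u' v v' im ↑j := fun im hi => by
        rw [exf_lt _ (lt_of_lt_of_le (Finset.mem_range.mp hi) (min_le_right k m))]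
      rw [Finset.sum_congr rfl e, tele_col u u' v v' hC3 (min k m) ↑j]
    refine (row_iff (u j) (u' j) (hu j) (hu' j) (fun i => AN u u' v v' ↑i ↑j)).mpr ⟨?_, ?_⟩
    · intro k
      rw [fin_filter_sum (fun i : Fin m => AN u u' v v' ↑i ↑j) k, key k]
      have h1 := hstep u u' v v' hu (min k m) ↑j j.isLt
      simp only [Fin.eta] at h1
      omega
    · rw [fin_sum (fun i : Fin m => AN u u' v v' ↑i ↑j)]
      have hk := key m
      rw [min_self] at hk
      rw [hk, Hml u u' v v' hu hC1 hC3 (↑j + 1), Hml u u' v v' hu hC1 hC3 ↑j]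
      have e : S2 u u' (↑j + 1) = S2 u u' ↑j + sg (u j) (u' j) := by
        unfold S2; rw [Finset.sum_range_succ, exf_lt _ j.isLt]
      omega

end Exist2


section Forward

variable {m n : ℕ} (u u' : Fin n → ℤ) (v v' : Fin m → ℤ)

lemma forward (hu : SignVec u) (hu' : SignVec u') (hv : SignVec v) (hv' : SignVec v')
    (A : Matrix (Fin m) (Fin n) ℤ) (hA : IsGASM u u' v v' A) :
    S2 v v' m = S2 u u' n ∧
    (∀ k, -(cP u n) ≤ S2 v v' k ∧ S2 v v' k ≤ cM u n) ∧
    (∀ l, -(cP v m) ≤ S2 u u' l ∧ S2 u u' l ≤ cM v m) := by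
  obtain ⟨hent, hrow, hcol⟩ := hA
  have rowC := fun i : Fin m =>
    (row_iff (v i) (v' i) (hv i) (hv' i) (fun j => A i j)).mp (hrow i)
  have colC := fun j : Fin n =>
    (row_iff (u j) (u' j) (hu j) (hu' j) (fun i => A i j)).mp (hcol j)
  have rowT : ∀ i : Fin m, (∑ j, A i j) = sg (v i) (v' i) := fun i => (rowC i).2
  have colT : ∀ j : Fin n, (∑ i, A i j) = sg (u j) (u' j) := fun j => (colC j).2
  have rowP : ∀ (i : Fin m) (k : ℕ),
      (∑ j ∈ Finset.univ.filter (fun j : Fin n => (j : ℕ) < k), A i j) = 0 ∨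
      (∑ j ∈ Finset.univ.filter (fun j : Fin n => (j : ℕ) < k), A i j) = -(v i) :=
    fun i => (rowC i).1
  have colP : ∀ (j : Fin n) (k : ℕ),
      (∑ i ∈ Finset.univ.filter (fun i : Fin m => (i : ℕ) < k), A i j) = 0 ∨
      (∑ i ∈ Finset.univ.filter (fun i : Fin m => (i : ℕ) < k), A i j) = -(u j) :=
    fun j => (colC j).1
  have hSv : ∀ k, S2 v v' k
      = ∑ j, (∑ i ∈ Finset.univ.filter (fun i : Fin m => (i : ℕ) < k), A i j) := by
    intro k
    unfold S2
    rw [← fin_filter_sum (fun i : Fin m => sg (v i) (v' i)) k,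
      Finset.sum_congr rfl (fun i (_ : i ∈ Finset.univ.filter (fun i : Fin m => (i : ℕ) < k)) =>
        (rowT i).symm)]
    exact Finset.sum_comm
  have hSu : ∀ l, S2 u u' l
      = ∑ i, (∑ j ∈ Finset.univ.filter (fun j : Fin n => (j : ℕ) < l), A i j) := by
    intro l
    unfold S2
    rw [← fin_filter_sum (fun j : Fin n => sg (u j) (u' j)) l,
      Finset.sum_congr rfl (fun j (_ : j ∈ Finset.univ.filter (fun j : Fin n => (j : ℕ) < l)) =>
        (colT j).symm)]
    exact Finset.sum_comm
  have hcPu : cP u n = ∑ j, (if u j = 1 then (1 : ℤ) else 0) := by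
    unfold cP; exact (fin_sum _).symm
  have hcMu : cM u n = ∑ j, (if u j = -1 then (1 : ℤ) else 0) := by
    unfold cM; exact (fin_sum _).symm
  have hcPv : cP v m = ∑ i, (if v i = 1 then (1 : ℤ) else 0) := by
    unfold cP; exact (fin_sum _).symm
  have hcMv : cM v m = ∑ i, (if v i = -1 then (1 : ℤ) else 0) := by
    unfold cM; exact (fin_sum _).symm
  refine ⟨?_, ?_, ?_⟩
  · have hfl : (Finset.univ.filter (fun i : Fin m => (i : ℕ) < m)) = Finset.univ := by
      ext i; simp [i.isLt]
    have h1 : S2 v v' m = ∑ j, sg (u j) (u' j) := by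
      rw [hSv m]
      exact Finset.sum_congr rfl (fun j _ => by rw [hfl]; exact colT j)
    have h2 : ∑ j, sg (u j) (u' j) = S2 u u' n := by
      unfold S2; exact fin_sum _
    exact h1.trans h2
  · intro k
    rw [hSv k]
    constructor
    · rw [hcPu, ← Finset.sum_neg_distrib]
      apply Finset.sum_le_sum
      intro j _
      have := colP j k
      rcases hu j with h | h <;> rw [h] at this <;> simp [h] <;> omega
    · rw [hcMu]
      apply Finset.sum_le_sum
      intro j _
      have := colP j k
      rcases hu j with h | h <;> rw [h] at this <;> simp [h] <;> omega
  · intro l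
    rw [hSu l]
    constructor
    · rw [hcPv, ← Finset.sum_neg_distrib]
      apply Finset.sum_le_sum
      intro i _
      have := rowP i l
      rcases hv i with h | h <;> rw [h] at this <;> simp [h] <;> omega
    · rw [hcMv]
      apply Finset.sum_le_sum
      intro i _
      have := rowP i l
      rcases hv i with h | h <;> rw [h] at this <;> simp [h] <;> omega

end Forward

section Bridges

lemma br_pair {p : ℕ} (w w' : Fin p → ℤ) (hw : SignVec w) (hw' : SignVec w') (k : ℕ) :
    ((Finset.univ.filter fun i : Fin p => (i : ℕ) < k ∧ w i = -1 ∧ w' i = -1).card : ℤ)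
      - ((Finset.univ.filter fun i : Fin p => (i : ℕ) < k ∧ w i = 1 ∧ w' i = 1).card : ℤ)
      = S2 w w' k := by
  rw [Finset.card_filter, Finset.card_filter]
  push_cast
  rw [← Finset.sum_sub_distrib]
  unfold S2
  rw [← fin_filter_sum (fun i : Fin p => sg (w i) (w' i)) k, Finset.sum_filter]
  apply Finset.sum_congr rfl
  intro i _
  by_cases hik : (i : ℕ) < k
  · rcases hw i with h | h <;> rcases hw' i with h' | h' <;>
      norm_num [sg, hik, h, h']
  · norm_num [hik]

lemma br_nok {p : ℕ} (w w' : Fin p → ℤ) (hw : SignVec w) (hw' : SignVec w') :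
    ((Finset.univ.filter fun i : Fin p => w i = -1 ∧ w' i = -1).card : ℤ)
      - ((Finset.univ.filter fun i : Fin p => w i = 1 ∧ w' i = 1).card : ℤ)
      = S2 w w' p := by
  have hfl : ∀ c : ℤ, (Finset.univ.filter fun i : Fin p => w i = c ∧ w' i = c)
      = (Finset.univ.filter fun i : Fin p => (i : ℕ) < p ∧ w i = c ∧ w' i = c) := by
    intro c; ext i; simp [i.isLt]
  rw [hfl (-1), hfl 1]
  exact br_pair w w' hw hw' p

lemma br_cntP {p : ℕ} (w : Fin p → ℤ) :
    ((Finset.univ.filter fun j : Fin p => w j = 1).card : ℤ) = cP w p := by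
  rw [Finset.card_filter]
  push_cast
  unfold cP
  rw [← fin_sum (fun j : Fin p => if w j = 1 then (1 : ℤ) else 0)]

lemma br_cntM {p : ℕ} (w : Fin p → ℤ) :
    ((Finset.univ.filter fun j : Fin p => w j = -1).card : ℤ) = cM w p := by
  rw [Finset.card_filter]
  push_cast
  unfold cM
  rw [← fin_sum (fun j : Fin p => if w j = -1 then (1 : ℤ) else 0)]

end Bridges

end GASMAux

theorem stmt10 {m n : ℕ} (u u' : Fin n → ℤ) (v v' : Fin m → ℤ)
    (hu : SignVec u) (hu' : SignVec u') (hv : SignVec v) (hv' : SignVec v') :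
    (∃ A : Matrix (Fin m) (Fin n) ℤ, IsGASM u u' v v' A) ↔
    (((Finset.univ.filter fun i : Fin m => v i = -1 ∧ v' i = -1).card : ℤ) -
        ((Finset.univ.filter fun i : Fin m => v i = 1 ∧ v' i = 1).card : ℤ) =
      ((Finset.univ.filter fun j : Fin n => u j = -1 ∧ u' j = -1).card : ℤ) -
        ((Finset.univ.filter fun j : Fin n => u j = 1 ∧ u' j = 1).card : ℤ)) ∧
    (∀ k : ℕ, 1 ≤ k → k ≤ m →
      -((Finset.univ.filter fun j : Fin n => u j = 1).card : ℤ) ≤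
        ((Finset.univ.filter fun i : Fin m => (i : ℕ) < k ∧ v i = -1 ∧ v' i = -1).card : ℤ) -
          ((Finset.univ.filter fun i : Fin m => (i : ℕ) < k ∧ v i = 1 ∧ v' i = 1).card : ℤ) ∧
      ((Finset.univ.filter fun i : Fin m => (i : ℕ) < k ∧ v i = -1 ∧ v' i = -1).card : ℤ) -
          ((Finset.univ.filter fun i : Fin m => (i : ℕ) < k ∧ v i = 1 ∧ v' i = 1).card : ℤ) ≤
        ((Finset.univ.filter fun j : Fin n => u j = -1).card : ℤ)) ∧
    (∀ l : ℕ, 1 ≤ l → l ≤ n →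
      -((Finset.univ.filter fun i : Fin m => v i = 1).card : ℤ) ≤
        ((Finset.univ.filter fun j : Fin n => (j : ℕ) < l ∧ u j = -1 ∧ u' j = -1).card : ℤ) -
          ((Finset.univ.filter fun j : Fin n => (j : ℕ) < l ∧ u j = 1 ∧ u' j = 1).card : ℤ) ∧
      ((Finset.univ.filter fun j : Fin n => (j : ℕ) < l ∧ u j = -1 ∧ u' j = -1).card : ℤ) -
          ((Finset.univ.filter fun j : Fin n => (j : ℕ) < l ∧ u j = 1 ∧ u' j = 1).card : ℤ) ≤
        ((Finset.univ.filter fun i : Fin m => v i = -1).card : ℤ)) := by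
  
  constructor
  · rintro ⟨A, hA⟩
    obtain ⟨hC1, hC2, hC3⟩ := GASMAux.forward u u' v v' hu hu' hv hv' A hA
    refine ⟨?_, ?_, ?_⟩
    · rw [GASMAux.br_nok v v' hv hv', GASMAux.br_nok u u' hu hu']
      exact hC1
    · intro k _ _
      rw [GASMAux.br_pair v v' hv hv' k, GASMAux.br_cntP u, GASMAux.br_cntM u]
      exact hC2 k
    · intro l _ _
      rw [GASMAux.br_pair u u' hu hu' l, GASMAux.br_cntP v, GASMAux.br_cntM v]
      exact hC3 l
  · rintro ⟨h1, h2, h3⟩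
    apply GASMAux.exists_gasm u u' v v' hu hu' hv hv'
    · rw [GASMAux.br_nok v v' hv hv', GASMAux.br_nok u u' hu hu'] at h1
      exact h1
    · have hin : ∀ k, 1 ≤ k → k ≤ m →
          -(GASMAux.cP u n) ≤ GASMAux.S2 v v' k ∧ GASMAux.S2 v v' k ≤ GASMAux.cM u n := by
        intro k hk1 hkm
        have := h2 k hk1 hkm
        rwa [GASMAux.br_pair v v' hv hv' k, GASMAux.br_cntP u, GASMAux.br_cntM u] at this
      intro k
      have hP := GASMAux.cP_nonneg u n
      have hM := GASMAux.cM_nonneg u n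
      have h0 : GASMAux.S2 v v' (0 : ℕ) = 0 := Finset.sum_range_zero _
      rcases Nat.eq_zero_or_pos k with rfl | hk
      · rw [h0]; constructor <;> omega
      · rcases le_or_gt k m with hkm | hkm
        · exact hin k hk hkm
        · have hst : GASMAux.S2 v v' k = GASMAux.S2 v v' m := GASMAux.S2_stable v v' hkm.le
          rcases Nat.eq_zero_or_pos m with hm | hm
          · subst hm
            rw [hst, h0]; constructor <;> omega
          · rw [hst]; exact hin m hm le_rfl
    · have hin : ∀ l, 1 ≤ l → l ≤ n →
          -(GASMAux.cP v m) ≤ GASMAux.S2 u u' l ∧ GASMAux.S2 u u' l ≤ GASMAux.cM v m := by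
        intro l hl1 hln
        have := h3 l hl1 hln
        rwa [GASMAux.br_pair u u' hu hu' l, GASMAux.br_cntP v, GASMAux.br_cntM v] at this
      intro l
      have hP := GASMAux.cP_nonneg v m
      have hM := GASMAux.cM_nonneg v m
      have h0 : GASMAux.S2 u u' (0 : ℕ) = 0 := Finset.sum_range_zero _
      rcases Nat.eq_zero_or_pos l with rfl | hl
      · rw [h0]; constructor <;> omega
      · rcases le_or_gt l n with hln | hln
        · exact hin l hl hln
        · have hst : GASMAux.S2 u u' l = GASMAux.S2 u u' n := GASMAux.S2_stable u u' hln.le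
          rcases Nat.eq_zero_or_pos n with hn | hn
          · subst hn
            rw [hst, h0]; constructor <;> omega
          · rw [hst]; exact hin n hn le_rfl
end

section
/- Let α_{n,k} = (+1,…,+1,−1,…,−1) with k entries +1 followed by n−k entries −1. Then the set of (α_{n,k},α_{n,k}|α_{n,k},α_{n,k})-ASMs is exactly the set of n×n matrices of the form (−A₁) ⊕ A₂ (block diagonal direct sum), where A₁ is a k×k ordinary ASM and A₂ is an (n−k)×(n−k) ordinary ASM. -/
/-- The vector with k entries +1 followed by n−k entries −1. -/
def alphaVec (n k : ℕ) : Fin n → ℤ := fun j => if (j : ℕ) < k then 1 else -1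

lemma altList_congr {l₁ l₂ : List ℤ} (h : l₁.filter (· ≠ 0) = l₂.filter (· ≠ 0)) :
    AltList l₁ ↔ AltList l₂ := by unfold AltList; rw [h]

lemma filter_map_neg (l : List ℤ) :
    (l.map (fun x => -x)).filter (· ≠ 0) = (l.filter (· ≠ 0)).map (fun x => -x) := by
  rw [List.filter_map]
  congr 2
  funext x
  simp

lemma altList_neg (l : List ℤ) : AltList (l.map (fun x => -x)) ↔ AltList l := by
  unfold AltList List.Chain'
  rw [filter_map_neg, List.isChain_map]
  constructor <;> exact fun h => h.imp (fun {a b} hab => by linarith)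

lemma altList_reverse (l : List ℤ) : AltList l.reverse ↔ AltList l := by
  unfold AltList List.Chain'
  rw [List.filter_reverse, List.isChain_reverse]
  constructor <;> exact fun h => h.imp (fun {a b} hab => by simpa [flip, mul_comm] using hab)

lemma alt_sum_take {l : List ℤ} {s : ℤ} (hs : s = 1 ∨ s = -1)
    (h : List.Chain' (fun x y => x * y = -1) (s :: l.filter (· ≠ 0))) (m : ℕ) :
    (l.take m).sum = 0 ∨ (l.take m).sum = -s := by
  induction l generalizing s m with
  | nil => simp
  | cons x t ih =>
    cases m with
    | zero => simp
    | succ m =>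
      by_cases hx : x = 0
      · subst hx
        simp only [List.take_succ_cons, List.sum_cons, zero_add]
        exact ih hs (by simpa using h) m
      · rw [show (x :: t).filter (· ≠ 0) = x :: t.filter (· ≠ 0) by simp [hx]] at h
        unfold List.Chain' at h
        rw [List.isChain_cons_cons] at h
        obtain ⟨hsx, h'⟩ := h
        have hx1 : x = -s := by rcases hs with rfl | rfl <;> linarith
        have hx' : x = 1 ∨ x = -1 := by rcases hs with rfl | rfl <;> simp [hx1]
        rcases ih hx' h' m with h0 | h1
        · right; simp [List.take_succ_cons, List.sum_cons, h0, hx1]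
        · left; simp [List.take_succ_cons, List.sum_cons, h1, hx1]

lemma ofFn_reverse {p : ℕ} (g : Fin p → ℤ) :
    (List.ofFn g).reverse = List.ofFn (fun j => g j.rev) := by
  apply List.ext_getElem
  · simp
  · intro i h1 h2
    simp only [List.getElem_reverse, List.getElem_ofFn, List.length_reverse, List.length_ofFn] at *
    congr 1
    ext
    simp [Fin.rev]
    omega

lemma alt_pre {p : ℕ} {g : Fin p → ℤ} {v v' : ℤ} (hv : v = 1 ∨ v = -1)
    (h : AltList (v :: (List.ofFn g) ++ [v'])) (c : ℕ) :
    (∑ j : Fin p, if (j : ℕ) < c then g j else 0) = 0 ∨ (∑ j : Fin p, if (j : ℕ) < c then g j else 0) = -v := by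
  have hv0 : v ≠ 0 := by rcases hv with rfl | rfl <;> norm_num
  have hchain : List.Chain' (fun x y => x * y = -1)
      (v :: (List.ofFn g).filter (· ≠ 0)) := by
    unfold AltList at h
    rw [List.filter_append, List.filter_cons_of_pos (by simpa using hv0)] at h
    exact h.prefix ⟨[v'].filter (· ≠ 0), by simp⟩
  have := alt_sum_take hv hchain c
  rwa [List.sum_take_ofFn, Finset.sum_filter] at this

lemma alt_suf {p : ℕ} {g : Fin p → ℤ} {v v' : ℤ} (hv' : v' = 1 ∨ v' = -1)
    (h : AltList (v :: (List.ofFn g) ++ [v'])) {c : ℕ} (hc : c ≤ p) :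
    (∑ j : Fin p, if c ≤ (j : ℕ) then g j else 0) = 0 ∨
      (∑ j : Fin p, if c ≤ (j : ℕ) then g j else 0) = -v' := by
  have h' : AltList (v' :: (List.ofFn fun j : Fin p => g j.rev) ++ [v]) := by
    rw [← ofFn_reverse]
    rw [← altList_reverse] at h
    simpa using h
  have key := alt_pre hv' h' (p - c)
  have hre : (∑ j : Fin p, if (j : ℕ) < p - c then g j.rev else 0)
      = ∑ j : Fin p, if c ≤ (j : ℕ) then g j else 0 := by
    apply Fintype.sum_equiv (Fin.revPerm)
    intro x
    have h1 : ((Fin.revPerm x : Fin p) : ℕ) = p - 1 - (x : ℕ) := by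
      simp [Fin.rev]; omega
    have hx := x.isLt
    have hcond : ((x : ℕ) < p - c) ↔ (c ≤ ((Fin.revPerm x : Fin p) : ℕ)) := by
      rw [h1]; omega
    by_cases hxc : (x : ℕ) < p - c
    · rw [if_pos hxc, if_pos (hcond.mp hxc)]
      rfl
    · rw [if_neg hxc, if_neg (fun hh => hxc (hcond.mpr hh))]
  rwa [hre] at key

lemma pre_succ {p : ℕ} (g : Fin p → ℤ) {c : ℕ} (hc : c < p) :
    (∑ j : Fin p, if (j : ℕ) < c + 1 then g j else 0)
      = (∑ j : Fin p, if (j : ℕ) < c then g j else 0) + g ⟨c, hc⟩ := by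
  have step : ∀ j : Fin p, (if (j : ℕ) < c + 1 then g j else 0)
      = (if (j : ℕ) < c then g j else 0) + (if j = ⟨c, hc⟩ then g j else 0) := by
    intro j
    by_cases h1 : (j : ℕ) < c
    · rw [if_pos (by omega), if_pos h1, if_neg (by simp [Fin.ext_iff]; omega), add_zero]
    · by_cases h2 : (j : ℕ) = c
      · rw [if_pos (by omega), if_neg h1, if_pos (by simp [Fin.ext_iff, h2]), zero_add]
      · rw [if_neg (by omega), if_neg h1, if_neg (by simp [Fin.ext_iff]; omega), add_zero]
  rw [Finset.sum_congr rfl (fun j _ => step j), Finset.sum_add_distrib]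
  simp

lemma suf_succ {p : ℕ} (g : Fin p → ℤ) {c : ℕ} (hc : c < p) :
    (∑ j : Fin p, if c ≤ (j : ℕ) then g j else 0)
      = (∑ j : Fin p, if c + 1 ≤ (j : ℕ) then g j else 0) + g ⟨c, hc⟩ := by
  have step : ∀ j : Fin p, (if c ≤ (j : ℕ) then g j else 0)
      = (if c + 1 ≤ (j : ℕ) then g j else 0) + (if j = ⟨c, hc⟩ then g j else 0) := by
    intro j
    by_cases h1 : c + 1 ≤ (j : ℕ)
    · rw [if_pos (by omega), if_pos h1, if_neg (by simp [Fin.ext_iff]; omega), add_zero]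
    · by_cases h2 : (j : ℕ) = c
      · rw [if_pos (by omega), if_neg h1, if_pos (by simp [Fin.ext_iff, h2]), zero_add]
      · rw [if_neg (by omega), if_neg h1, if_neg (by simp [Fin.ext_iff]; omega), add_zero]
  rw [Finset.sum_congr rfl (fun j _ => step j), Finset.sum_add_distrib]
  simp

section split
variable {n k : ℕ} (hk : k ≤ n)

/-- The canonical equivalence. -/
private def eqv (hk : k ≤ n) : Fin k ⊕ Fin (n - k) ≃ Fin n :=
  finSumFinEquiv.trans (finCongr (Nat.add_sub_cancel' hk))

lemma eqv_inl_val (a : Fin k) : ((eqv hk (Sum.inl a)) : ℕ) = a := by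
  simp [eqv]

lemma eqv_inr_val (b : Fin (n - k)) : ((eqv hk (Sum.inr b)) : ℕ) = k + b := by
  simp [eqv]

lemma ofFn_split (g : Fin n → ℤ) :
    List.ofFn g = (List.ofFn fun a : Fin k => g (eqv hk (Sum.inl a)))
      ++ (List.ofFn fun b : Fin (n - k) => g (eqv hk (Sum.inr b))) := by
  rw [List.ofFn_congr (Nat.add_sub_cancel' hk).symm g, List.ofFn_add]
  rfl

end split

lemma altList_append_zero_right {x y : ℤ} {l z : List ℤ} (hz : ∀ a ∈ z, a = 0) :
    AltList (x :: (l ++ z) ++ [y]) ↔ AltList (x :: l ++ [y]) := by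
  apply altList_congr
  have hzz : z.filter (· ≠ 0) = [] := by
    rw [List.filter_eq_nil_iff]
    intro a ha
    simpa using hz a ha
  simp only [List.filter_cons, List.filter_append, hzz, List.nil_append, List.append_nil]

lemma altList_append_zero_left {x y : ℤ} {l z : List ℤ} (hz : ∀ a ∈ z, a = 0) :
    AltList (x :: (z ++ l) ++ [y]) ↔ AltList (x :: l ++ [y]) := by
  apply altList_congr
  have hzz : z.filter (· ≠ 0) = [] := by
    rw [List.filter_eq_nil_iff]
    intro a ha
    simpa using hz a ha
  simp only [List.filter_cons, List.filter_append, hzz, List.nil_append, List.append_nil]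

lemma altList_neg_bordered {x y : ℤ} {l : List ℤ} :
    AltList (-x :: (l.map fun t => -t) ++ [-y]) ↔ AltList (x :: l ++ [y]) := by
  rw [← altList_neg (x :: l ++ [y])]
  simp

section main
variable {n k : ℕ}

lemma off_zero (hk : k ≤ n) {A : Matrix (Fin n) (Fin n) ℤ}
    (hA : IsGASM (alphaVec n k) (alphaVec n k) (alphaVec n k) (alphaVec n k) A) :
    ∀ i j : Fin n, (k ≤ (i : ℕ) ∧ (j : ℕ) < k) ∨ ((i : ℕ) < k ∧ k ≤ (j : ℕ)) → A i j = 0 := by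
  obtain ⟨hent, hrow, hcol⟩ := hA
  have hav : ∀ i : Fin n, (i : ℕ) < k → alphaVec n k i = 1 := fun i h => if_pos h
  have hav' : ∀ i : Fin n, ¬(i : ℕ) < k → alphaVec n k i = -1 := fun i h => if_neg h
  have hpreR : ∀ i : Fin n, k ≤ (i : ℕ) → ∀ c : ℕ,
      (∑ j : Fin n, if (j : ℕ) < c then A i j else 0) = 0 ∨
      (∑ j : Fin n, if (j : ℕ) < c then A i j else 0) = 1 := by
    intro i hi c
    have h := hrow i
    rw [hav' i (by omega)] at h
    simpa using alt_pre (Or.inr rfl) h c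
  have hsufR : ∀ i : Fin n, (i : ℕ) < k → ∀ c : ℕ, c ≤ n →
      (∑ j : Fin n, if c ≤ (j : ℕ) then A i j else 0) = 0 ∨
      (∑ j : Fin n, if c ≤ (j : ℕ) then A i j else 0) = -1 := by
    intro i hi c hc
    have h := hrow i
    rw [hav i hi] at h
    simpa using alt_suf (Or.inl rfl) h hc
  have hpreC : ∀ j : Fin n, k ≤ (j : ℕ) → ∀ c : ℕ,
      (∑ i : Fin n, if (i : ℕ) < c then A i j else 0) = 0 ∨
      (∑ i : Fin n, if (i : ℕ) < c then A i j else 0) = 1 := by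
    intro j hj c
    have h := hcol j
    rw [hav' j (by omega)] at h
    simpa using alt_pre (Or.inr rfl) h c
  have hsufC : ∀ j : Fin n, (j : ℕ) < k → ∀ c : ℕ, c ≤ n →
      (∑ i : Fin n, if c ≤ (i : ℕ) then A i j else 0) = 0 ∨
      (∑ i : Fin n, if c ≤ (i : ℕ) then A i j else 0) = -1 := by
    intro j hj c hc
    have h := hcol j
    rw [hav j hj] at h
    simpa using alt_suf (Or.inl rfl) h hc
  intro i₀ j₀ hcase
  rcases hcase with ⟨hi₀, hj₀⟩ | ⟨hi₀, hj₀⟩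
  · -- bottom-left block
    have key : ∀ c : ℕ, c ≤ k → (∑ j : Fin n, if (j : ℕ) < c then A i₀ j else 0) = 0 := by
      intro c hc
      set T := ∑ i : Fin n, ∑ j : Fin n, if (i₀ : ℕ) ≤ (i : ℕ) ∧ (j : ℕ) < c then A i j else 0
        with hT
      have hrowform : T = ∑ i : Fin n,
          if (i₀ : ℕ) ≤ (i : ℕ) then (∑ j : Fin n, if (j : ℕ) < c then A i j else 0) else 0 := by
        apply Finset.sum_congr rfl
        intro i _
        by_cases h : (i₀ : ℕ) ≤ (i : ℕ) <;> simp [h]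
      have hcolform : T = ∑ j : Fin n,
          if (j : ℕ) < c then (∑ i : Fin n, if (i₀ : ℕ) ≤ (i : ℕ) then A i j else 0) else 0 := by
        rw [hT, Finset.sum_comm]
        apply Finset.sum_congr rfl
        intro j _
        by_cases h : (j : ℕ) < c <;> simp [h]
      have h1 : (∑ j : Fin n, if (j : ℕ) < c then A i₀ j else 0) ≤ T := by
        rw [hrowform]
        have := Finset.single_le_sum (f := fun i : Fin n =>
          if (i₀ : ℕ) ≤ (i : ℕ) then (∑ j : Fin n, if (j : ℕ) < c then A i j else 0) else 0)
          (fun i _ => by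
            split
            · rcases hpreR i (by omega) c with h | h <;> rw [h] <;> norm_num
            · exact le_refl 0) (Finset.mem_univ i₀)
        simpa using this
      have h2 : T ≤ 0 := by
        rw [hcolform]
        apply Finset.sum_nonpos
        intro j _
        split
        · rcases hsufC j (by omega) (i₀ : ℕ) (by omega) with h | h <;> rw [h] <;> norm_num
        · exact le_refl 0
      rcases hpreR i₀ hi₀ c with h | h
      · exact h
      · linarith
    have e1 := key ((j₀ : ℕ) + 1) (by omega)
    have e0 := key (j₀ : ℕ) (by omega)
    have hps := pre_succ (fun j => A i₀ j) (show (j₀ : ℕ) < n from j₀.isLt)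
    rw [e1, e0] at hps
    simpa using hps.symm
  · -- top-right block
    have key : ∀ c : ℕ, k ≤ c → c ≤ n →
        (∑ j : Fin n, if c ≤ (j : ℕ) then A i₀ j else 0) = 0 := by
      intro c hkc hc
      set T := ∑ i : Fin n, ∑ j : Fin n, if (i : ℕ) ≤ (i₀ : ℕ) ∧ c ≤ (j : ℕ) then A i j else 0
        with hT
      have hrowform : T = ∑ i : Fin n,
          if (i : ℕ) ≤ (i₀ : ℕ) then (∑ j : Fin n, if c ≤ (j : ℕ) then A i j else 0) else 0 := by
        apply Finset.sum_congr rfl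
        intro i _
        by_cases h : (i : ℕ) ≤ (i₀ : ℕ) <;> simp [h]
      have hcolform : T = ∑ j : Fin n,
          if c ≤ (j : ℕ) then (∑ i : Fin n, if (i : ℕ) ≤ (i₀ : ℕ) then A i j else 0) else 0 := by
        rw [hT, Finset.sum_comm]
        apply Finset.sum_congr rfl
        intro j _
        by_cases h : c ≤ (j : ℕ) <;> simp [h]
      have h1 : T ≤ (∑ j : Fin n, if c ≤ (j : ℕ) then A i₀ j else 0) := by
        rw [hrowform]
        have := Finset.single_le_sum (f := fun i : Fin n =>
          -(if (i : ℕ) ≤ (i₀ : ℕ) then (∑ j : Fin n, if c ≤ (j : ℕ) then A i j else 0) else 0))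
          (fun i _ => by
            rw [neg_nonneg]
            split
            · rcases hsufR i (by omega) c hc with h | h <;> rw [h] <;> norm_num
            · exact le_refl 0) (Finset.mem_univ i₀)
        rw [Finset.sum_neg_distrib] at this
        simp only [if_pos (le_refl (i₀ : ℕ))] at this
        linarith
      have h2 : 0 ≤ T := by
        rw [hcolform]
        apply Finset.sum_nonneg
        intro j _
        split
        · rcases hpreC j (by omega) ((i₀ : ℕ) + 1) with h | h
          · have heq : (∑ i : Fin n, if (i : ℕ) ≤ (i₀ : ℕ) then A i j else 0)
                = ∑ i : Fin n, if (i : ℕ) < (i₀ : ℕ) + 1 then A i j else 0 := by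
              apply Finset.sum_congr rfl
              intro i _
              congr 1
              simp [Nat.lt_succ_iff]
            rw [heq, h]
          · have heq : (∑ i : Fin n, if (i : ℕ) ≤ (i₀ : ℕ) then A i j else 0)
                = ∑ i : Fin n, if (i : ℕ) < (i₀ : ℕ) + 1 then A i j else 0 := by
              apply Finset.sum_congr rfl
              intro i _
              congr 1
              simp [Nat.lt_succ_iff]
            rw [heq, h]
            norm_num
        · exact le_refl 0
      rcases hsufR i₀ hi₀ c hc with h | h
      · exact h
      · linarith
    have e1 := key ((j₀ : ℕ) + 1) (by omega) (by omega)
    have e0 := key (j₀ : ℕ) (by omega) (by omega)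
    have hps := suf_succ (fun j => A i₀ j) (show (j₀ : ℕ) < n from j₀.isLt)
    rw [e1, e0] at hps
    simpa using hps.symm

end main

lemma map_neg_ofFn {p : ℕ} (f : Fin p → ℤ) :
    (List.ofFn f).map (fun t => -t) = List.ofFn (fun b => -f b) := by
  rw [List.map_ofFn]; rfl

lemma altList_neg_bordered' {x y : ℤ} {p : ℕ} {f : Fin p → ℤ}
    (h : AltList (x :: List.ofFn f ++ [y])) :
    AltList (-x :: List.ofFn (fun b => -f b) ++ [-y]) := by
  rw [← map_neg_ofFn]
  exact altList_neg_bordered.mpr h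

lemma sum_cases {n k : ℕ} (hk : k ≤ n) (i : Fin n) :
    (∃ a : Fin k, i = eqv hk (Sum.inl a)) ∨ (∃ a : Fin (n - k), i = eqv hk (Sum.inr a)) := by
  rcases h : (eqv hk).symm i with a | a
  · exact Or.inl ⟨a, by rw [← h, Equiv.apply_symm_apply]⟩
  · exact Or.inr ⟨a, by rw [← h, Equiv.apply_symm_apply]⟩

theorem stmt11 {n k : ℕ} (hk : k ≤ n) (A : Matrix (Fin n) (Fin n) ℤ) :
    IsGASM (alphaVec n k) (alphaVec n k) (alphaVec n k) (alphaVec n k) A ↔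
    ∃ (A₁ : Matrix (Fin k) (Fin k) ℤ) (A₂ : Matrix (Fin (n - k)) (Fin (n - k)) ℤ),
      IsASM A₁ ∧ IsASM A₂ ∧
      A = Matrix.reindex (finSumFinEquiv.trans (finCongr (Nat.add_sub_cancel' hk))) (finSumFinEquiv.trans (finCongr (Nat.add_sub_cancel' hk)))
            (Matrix.fromBlocks (-A₁) 0 0 A₂) := by
  have heqv : finSumFinEquiv.trans (finCongr (Nat.add_sub_cancel' hk)) = eqv hk := rfl
  rw [heqv]
  have hvl : ∀ a : Fin k, alphaVec n k (eqv hk (Sum.inl a)) = 1 := by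
    intro a
    have := eqv_inl_val hk a
    unfold alphaVec
    rw [if_pos (by omega)]
  have hvr : ∀ a : Fin (n - k), alphaVec n k (eqv hk (Sum.inr a)) = -1 := by
    intro a
    have := eqv_inr_val hk a
    unfold alphaVec
    rw [if_neg (by omega)]
  constructor
  · -- forward
    intro hA
    have hz := off_zero hk hA
    obtain ⟨hent, hrow, hcol⟩ := hA
    refine ⟨fun a b => -A (eqv hk (Sum.inl a)) (eqv hk (Sum.inl b)),
            fun a b => A (eqv hk (Sum.inr a)) (eqv hk (Sum.inr b)), ⟨?_, ?_, ?_⟩, ⟨?_, ?_, ?_⟩, ?_⟩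
    · intro a b
      rcases hent (eqv hk (Sum.inl a)) (eqv hk (Sum.inl b)) with h | h | h
      · left; simp [h]
      · right; right; simp [h]
      · right; left; simp [h]
    · -- rows of A₁
      intro a
      have hrowi := hrow (eqv hk (Sum.inl a))
      rw [hvl a, ofFn_split hk] at hrowi
      rw [altList_append_zero_right (by
        intro x hx
        rw [List.mem_ofFn] at hx
        obtain ⟨b, rfl⟩ := hx
        exact hz _ _ (Or.inr ⟨by rw [eqv_inl_val]; exact a.isLt, by rw [eqv_inr_val]; omega⟩))]
        at hrowi
      exact altList_neg_bordered' hrowi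
    · -- cols of A₁
      intro b
      have hcoli := hcol (eqv hk (Sum.inl b))
      rw [hvl b, ofFn_split hk] at hcoli
      rw [altList_append_zero_right (by
        intro x hx
        rw [List.mem_ofFn] at hx
        obtain ⟨c, rfl⟩ := hx
        exact hz _ _ (Or.inl ⟨by rw [eqv_inr_val]; omega, by rw [eqv_inl_val]; exact b.isLt⟩))]
        at hcoli
      exact altList_neg_bordered' hcoli
    · intro a b
      rcases hent (eqv hk (Sum.inr a)) (eqv hk (Sum.inr b)) with h | h | h
      · left; exact h
      · right; left; exact h
      · right; right; exact h
    · -- rows of A₂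
      intro a
      have hrowi := hrow (eqv hk (Sum.inr a))
      rw [hvr a, ofFn_split hk] at hrowi
      rw [altList_append_zero_left (by
        intro x hx
        rw [List.mem_ofFn] at hx
        obtain ⟨b, rfl⟩ := hx
        exact hz _ _ (Or.inl ⟨by rw [eqv_inr_val]; omega, by rw [eqv_inl_val]; exact b.isLt⟩))]
        at hrowi
      exact hrowi
    · -- cols of A₂
      intro b
      have hcoli := hcol (eqv hk (Sum.inr b))
      rw [hvr b, ofFn_split hk] at hcoli
      rw [altList_append_zero_left (by
        intro x hx
        rw [List.mem_ofFn] at hx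
        obtain ⟨c, rfl⟩ := hx
        exact hz _ _ (Or.inr ⟨by rw [eqv_inl_val]; exact c.isLt, by rw [eqv_inr_val]; omega⟩))]
        at hcoli
      exact hcoli
    · -- matrix equality
      ext i j
      rw [Matrix.reindex_apply, Matrix.submatrix_apply]
      rcases sum_cases hk i with ⟨a, rfl⟩ | ⟨a, rfl⟩ <;>
        rcases sum_cases hk j with ⟨b, rfl⟩ | ⟨b, rfl⟩ <;>
          rw [Equiv.symm_apply_apply, Equiv.symm_apply_apply]
      · exact (neg_neg _).symm
      · change _ = (0 : ℤ)
        exact hz _ _ (Or.inr ⟨by rw [eqv_inl_val]; exact a.isLt, by rw [eqv_inr_val]; omega⟩)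
      · change _ = (0 : ℤ)
        exact hz _ _ (Or.inl ⟨by rw [eqv_inr_val]; omega, by rw [eqv_inl_val]; exact b.isLt⟩)
      · rfl
  · -- backward
    rintro ⟨A₁, A₂, ⟨h1e, h1r, h1c⟩, ⟨h2e, h2r, h2c⟩, rfl⟩
    set M := Matrix.fromBlocks (-A₁) (0 : Matrix (Fin k) (Fin (n - k)) ℤ)
      (0 : Matrix (Fin (n - k)) (Fin k) ℤ) A₂ with hM
    refine ⟨?_, ?_, ?_⟩
    · intro i j
      rw [Matrix.reindex_apply, Matrix.submatrix_apply]
      rcases sum_cases hk i with ⟨a, rfl⟩ | ⟨a, rfl⟩ <;>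
        rcases sum_cases hk j with ⟨b, rfl⟩ | ⟨b, rfl⟩ <;>
          rw [Equiv.symm_apply_apply, Equiv.symm_apply_apply]
      · rcases h1e a b with h | h | h
        · left; simp [hM, h]
        · right; right; simp [hM, h]
        · right; left; simp [hM, h]
      · left; simp [hM]
      · left; simp [hM]
      · exact h2e a b
    · -- rows
      intro i
      rcases sum_cases hk i with ⟨a, rfl⟩ | ⟨a, rfl⟩
      · rw [hvl a, ofFn_split hk]
        have hl : (List.ofFn fun b : Fin k =>
            (Matrix.reindex (eqv hk) (eqv hk) M) (eqv hk (Sum.inl a)) (eqv hk (Sum.inl b)))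
            = List.ofFn (fun b => -A₁ a b) := by
          apply congrArg
          funext b
          simp [hM, Matrix.reindex_apply, Matrix.submatrix_apply]
        have hr : ∀ x ∈ (List.ofFn fun b : Fin (n - k) =>
            (Matrix.reindex (eqv hk) (eqv hk) M) (eqv hk (Sum.inl a)) (eqv hk (Sum.inr b))), x = 0 := by
          intro x hx
          rw [List.mem_ofFn] at hx
          obtain ⟨b, rfl⟩ := hx
          simp [hM, Matrix.reindex_apply, Matrix.submatrix_apply]
        rw [hl, altList_append_zero_right hr]
        have := altList_neg_bordered' (h1r a)
        simpa using this
      · rw [hvr a, ofFn_split hk]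
        have hl : ∀ x ∈ (List.ofFn fun b : Fin k =>
            (Matrix.reindex (eqv hk) (eqv hk) M) (eqv hk (Sum.inr a)) (eqv hk (Sum.inl b))), x = 0 := by
          intro x hx
          rw [List.mem_ofFn] at hx
          obtain ⟨b, rfl⟩ := hx
          simp [hM, Matrix.reindex_apply, Matrix.submatrix_apply]
        have hr : (List.ofFn fun b : Fin (n - k) =>
            (Matrix.reindex (eqv hk) (eqv hk) M) (eqv hk (Sum.inr a)) (eqv hk (Sum.inr b)))
            = List.ofFn (fun b => A₂ a b) := by
          apply congrArg
          funext b
          simp [hM, Matrix.reindex_apply, Matrix.submatrix_apply]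
        rw [hr, altList_append_zero_left hl]
        exact h2r a
    · -- cols
      intro j
      rcases sum_cases hk j with ⟨a, rfl⟩ | ⟨a, rfl⟩
      · rw [hvl a, ofFn_split hk]
        have hl : (List.ofFn fun b : Fin k =>
            (Matrix.reindex (eqv hk) (eqv hk) M) (eqv hk (Sum.inl b)) (eqv hk (Sum.inl a)))
            = List.ofFn (fun b => -A₁ b a) := by
          apply congrArg
          funext b
          simp [hM, Matrix.reindex_apply, Matrix.submatrix_apply]
        have hr : ∀ x ∈ (List.ofFn fun b : Fin (n - k) =>
            (Matrix.reindex (eqv hk) (eqv hk) M) (eqv hk (Sum.inr b)) (eqv hk (Sum.inl a))), x = 0 := by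
          intro x hx
          rw [List.mem_ofFn] at hx
          obtain ⟨b, rfl⟩ := hx
          simp [hM, Matrix.reindex_apply, Matrix.submatrix_apply]
        rw [hl, altList_append_zero_right hr]
        have := altList_neg_bordered' (h1c a)
        simpa using this
      · rw [hvr a, ofFn_split hk]
        have hl : ∀ x ∈ (List.ofFn fun b : Fin k =>
            (Matrix.reindex (eqv hk) (eqv hk) M) (eqv hk (Sum.inl b)) (eqv hk (Sum.inr a))), x = 0 := by
          intro x hx
          rw [List.mem_ofFn] at hx
          obtain ⟨b, rfl⟩ := hx
          simp [hM, Matrix.reindex_apply, Matrix.submatrix_apply]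
        have hr : (List.ofFn fun b : Fin (n - k) =>
            (Matrix.reindex (eqv hk) (eqv hk) M) (eqv hk (Sum.inr b)) (eqv hk (Sum.inr a)))
            = List.ofFn (fun b => A₂ b a) := by
          apply congrArg
          funext b
          simp [hM, Matrix.reindex_apply, Matrix.submatrix_apply]
        rw [hr, altList_append_zero_left hl]
        exact h2c a
end

section
/- Let A be an (α_{n,k},α_{n,k}|α_{n,k},α_{n,k})-ASM, where α_{n,k} has k entries +1 followed by n−k entries −1. Then the off-diagonal blocks A[1..k | k+1..n] and A[k+1..n | 1..k] are zero matrices. -/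
lemma take_ofFn_sum {n : ℕ} (f : Fin n → ℤ) (m : ℕ) :
    ((List.ofFn f).take m).sum = ∑ j ∈ Finset.univ.filter (fun j : Fin n => (j : ℕ) < m), f j := by
  induction n generalizing m with
  | zero => simp
  | succ n ih =>
    rw [Finset.sum_filter, Fin.sum_univ_succ]
    cases m with
    | zero => simp
    | succ m =>
      rw [List.ofFn_succ, List.take_succ_cons, List.sum_cons, ih]
      simp [Finset.sum_filter, Nat.succ_lt_succ_iff]

lemma alt_key (s : ℤ) (hs : s = 1 ∨ s = -1) (l : List ℤ)
    (h0 : ∀ x ∈ l, x = 0 ∨ x = 1 ∨ x = -1)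
    (h : List.Chain' (fun x y => x * y = -1) (s :: l.filter (· ≠ 0))) :
    ∀ m, (l.take m).sum = 0 ∨ (l.take m).sum = -s := by
  induction l generalizing s with
  | nil => intro m; simp
  | cons a l ih =>
    intro m
    cases m with
    | zero => simp
    | succ m =>
      rw [List.take_succ_cons, List.sum_cons]
      by_cases ha : a = 0
      · subst ha
        rw [show ((0 : ℤ) :: l).filter (· ≠ 0) = l.filter (· ≠ 0) by simp] at h
        rcases ih s hs (fun x hx => h0 x (List.mem_cons_of_mem _ hx)) h m with h' | h' <;>
          simp [h']
      · rw [show ((a : ℤ) :: l).filter (· ≠ 0) = a :: l.filter (· ≠ 0) by simp [ha]] at h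
        rw [List.Chain', List.isChain_cons_cons] at h
        have hsa : a = -s := by rcases hs with rfl | rfl <;> linarith [h.1]
        have ha' : a = 1 ∨ a = -1 := by rcases hs with rfl | rfl <;> omega
        rcases ih a ha' (fun x hx => h0 x (List.mem_cons_of_mem _ hx)) h.2 m with h' | h' <;>
          omega

lemma bordered (s : ℤ) (hs : s = 1 ∨ s = -1) (L : List ℤ)
    (h0 : ∀ x ∈ L, x = 0 ∨ x = 1 ∨ x = -1)
    (h : AltList (s :: L ++ [s])) :
    (∀ m, (L.take m).sum = 0 ∨ (L.take m).sum = -s) ∧ L.sum = -s := by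
  have hs0 : s ≠ 0 := by rcases hs with rfl | rfl <;> norm_num
  have h0' : ∀ x ∈ L ++ [s], x = 0 ∨ x = 1 ∨ x = -1 := by
    intro x hx
    rcases List.mem_append.1 hx with hx | hx
    · exact h0 x hx
    · simp at hx; subst hx; tauto
  have hchain : List.Chain' (fun x y => x * y = -1) (s :: (L ++ [s]).filter (· ≠ 0)) := by
    have : (s :: L ++ [s]).filter (· ≠ 0) = s :: (L ++ [s]).filter (· ≠ 0) := by
      simp [List.filter_cons, hs0]
    rw [AltList, this] at h
    exact h
  have key := alt_key s hs (L ++ [s]) h0' hchain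
  constructor
  · intro m
    rcases le_or_gt m L.length with hm | hm
    · have := key m
      rwa [List.take_append_of_le_length hm] at this
    · have := key L.length
      rw [List.take_append_of_le_length le_rfl, List.take_length] at this
      rwa [List.take_of_length_le (by omega)]
  · have h1 := key L.length
    rw [List.take_append_of_le_length le_rfl, List.take_length] at h1
    have h2 := key (L.length + 1)
    rw [List.take_of_length_le (by simp)] at h2
    rw [List.sum_append, List.sum_singleton] at h2
    rcases hs with rfl | rfl <;> omega

lemma block0 {n : ℕ} (A : Matrix (Fin n) (Fin n) ℤ) (r1 r2 : ℕ)
    (colset : Finset (Fin n))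
    (h1 : ∀ i : Fin n, r1 ≤ i.val → i.val < r2 → ∑ j ∈ colset, A i j = 0)
    (h3 : ∀ j ∈ colset,
      ∑ i ∈ Finset.univ.filter (fun i : Fin n => r1 ≤ i.val ∧ i.val < r2), A i j = 0)
    (h2 : ∀ j ∈ colset, ∀ t : ℕ,
      0 ≤ ∑ i ∈ Finset.univ.filter (fun i : Fin n => r1 ≤ i.val ∧ i.val < t), A i j) :
    ∀ i : Fin n, r1 ≤ i.val → i.val < r2 → ∀ j ∈ colset, A i j = 0 := by
  have main : ∀ t : ℕ, ∀ i : Fin n, r1 ≤ i.val → i.val < r2 → r2 - i.val ≤ t →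
      ∀ j ∈ colset, A i j = 0 := by
    intro t
    induction t with
    | zero => intro i hi1 hi2 hit; omega
    | succ t ih =>
      intro i hi1 hi2 hit
      have hbelow : ∀ i' : Fin n, i.val < i'.val → i'.val < r2 → ∀ j ∈ colset, A i' j = 0 :=
        fun i' h' h'' => ih i' (by omega) h'' (by omega)
      have hnonpos : ∀ j ∈ colset, A i j ≤ 0 := by
        intro j hj
        have hsplit := Finset.sum_filter_add_sum_filter_not
          (Finset.univ.filter (fun i' : Fin n => r1 ≤ i'.val ∧ i'.val < r2))
          (fun i' : Fin n => i'.val ≤ i.val) (fun i' => A i' j)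
        have e1 : (Finset.univ.filter (fun i' : Fin n => r1 ≤ i'.val ∧ i'.val < r2)).filter
            (fun i' : Fin n => i'.val ≤ i.val)
            = Finset.univ.filter (fun i' : Fin n => r1 ≤ i'.val ∧ i'.val < i.val + 1) := by
          ext x; simp only [Finset.mem_filter, Finset.mem_univ, true_and]; omega
        have hzero2 : ∑ i' ∈ (Finset.univ.filter
            (fun i' : Fin n => r1 ≤ i'.val ∧ i'.val < r2)).filter
            (fun i' : Fin n => ¬ i'.val ≤ i.val), A i' j = 0 := by
          apply Finset.sum_eq_zero
          intro x hx
          simp only [Finset.mem_filter, Finset.mem_univ, true_and] at hx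
          exact hbelow x (by omega) hx.1.2 j hj
        rw [e1, hzero2, add_zero, h3 j hj] at hsplit
        -- hsplit : ∑ over filter (r1 ≤ · < i+1) = 0  (careful direction)
        have hsplit2 := Finset.sum_filter_add_sum_filter_not
          (Finset.univ.filter (fun i' : Fin n => r1 ≤ i'.val ∧ i'.val < i.val + 1))
          (fun i' : Fin n => i'.val < i.val) (fun i' => A i' j)
        have e2 : (Finset.univ.filter (fun i' : Fin n => r1 ≤ i'.val ∧ i'.val < i.val + 1)).filter
            (fun i' : Fin n => i'.val < i.val)
            = Finset.univ.filter (fun i' : Fin n => r1 ≤ i'.val ∧ i'.val < i.val) := by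
          ext x; simp only [Finset.mem_filter, Finset.mem_univ, true_and]; omega
        have e3 : (Finset.univ.filter (fun i' : Fin n => r1 ≤ i'.val ∧ i'.val < i.val + 1)).filter
            (fun i' : Fin n => ¬ i'.val < i.val) = {i} := by
          ext x
          simp only [Finset.mem_filter, Finset.mem_univ, true_and, Finset.mem_singleton,
            Fin.ext_iff]
          omega
        rw [e2, e3, Finset.sum_singleton] at hsplit2
        have := h2 j hj i.val
        omega
      have hsum := h1 i hi1 hi2
      intro j hj
      exact (Finset.sum_eq_zero_iff_of_nonpos hnonpos).1 hsum j hj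
  exact fun i hi1 hi2 => main r2 i hi1 hi2 (by omega)

theorem stmt12 {n k : ℕ} (hk : k ≤ n) (A : Matrix (Fin n) (Fin n) ℤ)
    (hA : IsGASM (alphaVec n k) (alphaVec n k) (alphaVec n k) (alphaVec n k) A) :
    ∀ i j : Fin n,
      ((i : ℕ) < k ∧ ¬ (j : ℕ) < k → A i j = 0) ∧
      (¬ (i : ℕ) < k ∧ (j : ℕ) < k → A i j = 0) := by
  have halpha : ∀ i : Fin n, alphaVec n k i = 1 ∨ alphaVec n k i = -1 := by
    intro i; unfold alphaVec; split <;> simp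
  -- row facts
  have hrowP : ∀ i : Fin n,
      (∀ m : ℕ, (∑ j ∈ Finset.univ.filter (fun j : Fin n => (j : ℕ) < m), A i j) = 0 ∨
        (∑ j ∈ Finset.univ.filter (fun j : Fin n => (j : ℕ) < m), A i j) = -(alphaVec n k i)) ∧
      (∑ j, A i j) = -(alphaVec n k i) := by
    intro i
    have h0 : ∀ x ∈ List.ofFn (fun j => A i j), x = 0 ∨ x = 1 ∨ x = -1 := by
      intro x hx
      rw [List.mem_ofFn] at hx
      obtain ⟨j, rfl⟩ := hx
      exact hA.1 i j
    have hb := bordered _ (halpha i) _ h0 (hA.2.1 i)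
    refine ⟨fun m => ?_, ?_⟩
    · rw [← take_ofFn_sum]; exact hb.1 m
    · rw [← List.sum_ofFn]; exact hb.2
  have hcolQ : ∀ j : Fin n,
      (∀ m : ℕ, (∑ i ∈ Finset.univ.filter (fun i : Fin n => (i : ℕ) < m), A i j) = 0 ∨
        (∑ i ∈ Finset.univ.filter (fun i : Fin n => (i : ℕ) < m), A i j) = -(alphaVec n k j)) ∧
      (∑ i, A i j) = -(alphaVec n k j) := by
    intro j
    have h0 : ∀ x ∈ List.ofFn (fun i => A i j), x = 0 ∨ x = 1 ∨ x = -1 := by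
      intro x hx
      rw [List.mem_ofFn] at hx
      obtain ⟨i, rfl⟩ := hx
      exact hA.1 i j
    have hb := bordered _ (halpha j) _ h0 (hA.2.2 j)
    refine ⟨fun m => ?_, ?_⟩
    · rw [← take_ofFn_sum]; exact hb.1 m
    · rw [← List.sum_ofFn]; exact hb.2
  have hlt : ∀ i : Fin n, (i : ℕ) < k → alphaVec n k i = 1 := by
    intro i hi; simp [alphaVec, hi]
  have hge : ∀ i : Fin n, ¬ (i : ℕ) < k → alphaVec n k i = -1 := by
    intro i hi; simp [alphaVec, hi]
  set Ptop := Finset.univ.filter (fun i : Fin n => (i : ℕ) < k) with hPtop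
  set Pbot := Finset.univ.filter (fun i : Fin n => ¬ (i : ℕ) < k) with hPbot
  have hsplitrow : ∀ i : Fin n, ∑ j ∈ Ptop, A i j + ∑ j ∈ Pbot, A i j = ∑ j, A i j :=
    fun i => Finset.sum_filter_add_sum_filter_not _ _ _
  have hsplitcol : ∀ j : Fin n, ∑ i ∈ Ptop, A i j + ∑ i ∈ Pbot, A i j = ∑ i, A i j :=
    fun j => Finset.sum_filter_add_sum_filter_not _ _ _
  -- step 1, top-right block sums
  have hcomm1 : (∑ i ∈ Ptop, ∑ j ∈ Pbot, A i j) = ∑ j ∈ Pbot, ∑ i ∈ Ptop, A i j :=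
    Finset.sum_comm
  have hle1 : ∑ i ∈ Ptop, ∑ j ∈ Pbot, A i j ≤ 0 := by
    apply Finset.sum_nonpos
    intro i hi
    rw [hPtop, Finset.mem_filter] at hi
    have h1 := (hrowP i).2
    rw [hlt i hi.2] at h1
    have h2 := (hrowP i).1 k
    rw [hlt i hi.2] at h2
    have h3 := hsplitrow i
    rw [hPtop] at h3
    omega
  have hge1 : 0 ≤ ∑ j ∈ Pbot, ∑ i ∈ Ptop, A i j := by
    apply Finset.sum_nonneg
    intro j hj
    rw [hPbot, Finset.mem_filter] at hj
    have h2 := (hcolQ j).1 k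
    rw [hge j hj.2] at h2
    rw [hPtop]
    omega
  have hzero1 : (∑ i ∈ Ptop, ∑ j ∈ Pbot, A i j) = 0 := by omega
  have hRtop : ∀ i : Fin n, (i : ℕ) < k → ∑ j ∈ Pbot, A i j = 0 := by
    intro i hi
    have := (Finset.sum_eq_zero_iff_of_nonpos ?_).1 hzero1 i ?_
    · exact this
    · intro i' hi'
      rw [hPtop, Finset.mem_filter] at hi'
      have h1 := (hrowP i').2
      rw [hlt i' hi'.2] at h1
      have h2 := (hrowP i').1 k
      rw [hlt i' hi'.2] at h2
      have h3 := hsplitrow i'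
      rw [hPtop] at h3
      omega
    · rw [hPtop, Finset.mem_filter]; exact ⟨Finset.mem_univ i, hi⟩
  have hT : ∀ j : Fin n, ¬ (j : ℕ) < k → ∑ i ∈ Ptop, A i j = 0 := by
    intro j hj
    have hzero1' : (∑ j ∈ Pbot, ∑ i ∈ Ptop, A i j) = 0 := by omega
    refine (Finset.sum_eq_zero_iff_of_nonneg ?_).1 hzero1' j ?_
    · intro j' hj'
      rw [hPbot, Finset.mem_filter] at hj'
      have h2 := (hcolQ j').1 k
      rw [hge j' hj'.2] at h2
      rw [hPtop]
      omega
    · rw [hPbot, Finset.mem_filter]; exact ⟨Finset.mem_univ j, hj⟩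
  -- step 1, bottom-left block sums
  have hcomm2 : (∑ i ∈ Pbot, ∑ j ∈ Ptop, A i j) = ∑ j ∈ Ptop, ∑ i ∈ Pbot, A i j :=
    Finset.sum_comm
  have hge2 : 0 ≤ ∑ i ∈ Pbot, ∑ j ∈ Ptop, A i j := by
    apply Finset.sum_nonneg
    intro i hi
    rw [hPbot, Finset.mem_filter] at hi
    have h2 := (hrowP i).1 k
    rw [hge i hi.2] at h2
    rw [hPtop]
    omega
  have hle2 : ∑ j ∈ Ptop, ∑ i ∈ Pbot, A i j ≤ 0 := by
    apply Finset.sum_nonpos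
    intro j hj
    rw [hPtop, Finset.mem_filter] at hj
    have h1 := (hcolQ j).2
    rw [hlt j hj.2] at h1
    have h2 := (hcolQ j).1 k
    rw [hlt j hj.2] at h2
    have h3 := hsplitcol j
    rw [hPtop] at h3
    omega
  have hLbot : ∀ i : Fin n, ¬ (i : ℕ) < k → ∑ j ∈ Ptop, A i j = 0 := by
    intro i hi
    have hz : (∑ i ∈ Pbot, ∑ j ∈ Ptop, A i j) = 0 := by omega
    refine (Finset.sum_eq_zero_iff_of_nonneg ?_).1 hz i ?_
    · intro i' hi'
      rw [hPbot, Finset.mem_filter] at hi'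
      have h2 := (hrowP i').1 k
      rw [hge i' hi'.2] at h2
      rw [hPtop]
      omega
    · rw [hPbot, Finset.mem_filter]; exact ⟨Finset.mem_univ i, hi⟩
  have hQ : ∀ j : Fin n, (j : ℕ) < k → ∑ i ∈ Pbot, A i j = 0 := by
    intro j hj
    have hz : (∑ j ∈ Ptop, ∑ i ∈ Pbot, A i j) = 0 := by omega
    refine (Finset.sum_eq_zero_iff_of_nonpos ?_).1 hz j ?_
    · intro j' hj'
      rw [hPtop, Finset.mem_filter] at hj'
      have h1 := (hcolQ j').2
      rw [hlt j' hj'.2] at h1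
      have h2 := (hcolQ j').1 k
      rw [hlt j' hj'.2] at h2
      have h3 := hsplitcol j'
      rw [hPtop] at h3
      omega
    · rw [hPtop, Finset.mem_filter]; exact ⟨Finset.mem_univ j, hj⟩
  -- Q j k = -1 for j < k
  have hQk : ∀ j : Fin n, (j : ℕ) < k → ∑ i ∈ Ptop, A i j = -1 := by
    intro j hj
    have h1 := (hcolQ j).2
    rw [hlt j hj] at h1
    have h3 := hsplitcol j
    have h4 := hQ j hj
    omega
  -- apply block0 to top-right block
  have htop := block0 A 0 k Pbot
    (fun i _ hi2 => hRtop i hi2)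
    (by
      intro j hj
      rw [hPbot, Finset.mem_filter] at hj
      have e : Finset.univ.filter (fun i : Fin n => 0 ≤ i.val ∧ i.val < k) = Ptop := by
        rw [hPtop]; ext x; simp
      rw [e]
      exact hT j hj.2)
    (by
      intro j hj t
      rw [hPbot, Finset.mem_filter] at hj
      have e : Finset.univ.filter (fun i : Fin n => 0 ≤ i.val ∧ i.val < t)
          = Finset.univ.filter (fun i : Fin n => i.val < t) := by
        ext x; simp
      rw [e]
      have h2 := (hcolQ j).1 t
      rw [hge j hj.2] at h2
      omega)
  -- apply block0 to bottom-left block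
  have hbot := block0 A k n Ptop
    (fun i hi1 _ => hLbot i (by omega))
    (by
      intro j hj
      rw [hPtop, Finset.mem_filter] at hj
      have e : Finset.univ.filter (fun i : Fin n => k ≤ i.val ∧ i.val < n) = Pbot := by
        rw [hPbot]; ext x
        simp only [Finset.mem_filter, Finset.mem_univ, true_and]
        have := x.isLt
        omega
      rw [e]
      exact hQ j hj.2)
    (by
      intro j hj t
      rw [hPtop, Finset.mem_filter] at hj
      have hsplit := Finset.sum_filter_add_sum_filter_not
        (Finset.univ.filter (fun i : Fin n => i.val < t))
        (fun i : Fin n => i.val < k) (fun i => A i j)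
      by_cases ht : t ≤ k
      · have e : Finset.univ.filter (fun i : Fin n => k ≤ i.val ∧ i.val < t) = ∅ := by
          ext x; simp only [Finset.mem_filter, Finset.mem_univ, true_and,
            Finset.notMem_empty, iff_false]; omega
        rw [e, Finset.sum_empty]
      · have e1 : (Finset.univ.filter (fun i : Fin n => i.val < t)).filter
            (fun i : Fin n => i.val < k) = Ptop := by
          rw [hPtop]; ext x
          simp only [Finset.mem_filter, Finset.mem_univ, true_and]
          omega
        have e2 : (Finset.univ.filter (fun i : Fin n => i.val < t)).filter
            (fun i : Fin n => ¬ i.val < k)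
            = Finset.univ.filter (fun i : Fin n => k ≤ i.val ∧ i.val < t) := by
          ext x; simp only [Finset.mem_filter, Finset.mem_univ, true_and]; omega
        rw [e1, e2, hQk j hj.2] at hsplit
        have h2 := (hcolQ j).1 t
        rw [hlt j hj.2] at h2
        omega)
  -- conclude
  intro i j
  constructor
  · rintro ⟨hi, hj⟩
    exact htop i (by omega) hi j (by rw [hPbot, Finset.mem_filter]; exact ⟨Finset.mem_univ j, hj⟩)
  · rintro ⟨hi, hj⟩
    exact hbot i (by omega) i.isLt j
      (by rw [hPtop, Finset.mem_filter]; exact ⟨Finset.mem_univ j, hj⟩)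
end

section
/- Let n be odd and let u = u' = v = v' = (+1,−1,+1,…,−1,+1) (alternating, starting and ending with +1, length n). Then the n×n matrix A with a_{ij} = (−1)^{i+j+1} (i.e., checkerboard pattern of −1s and +1s with a_{11} = −1) is a (u,u'|v,v')-ASM with no zero entries. -/
/-- The alternating ±1 vector (+1, −1, +1, …). -/
def altVec (n : ℕ) : Fin n → ℤ := fun j => if Even (j : ℕ) then 1 else -1

lemma altOfFn (m c : ℕ) : AltList (List.ofFn fun t : Fin m => (-1:ℤ)^(c+(t:ℕ))) := by
  unfold AltList
  rw [List.filter_eq_self.mpr]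
  · rw [List.Chain', List.isChain_iff_getElem]
    intro i hi
    simp only [List.getElem_ofFn, List.length_ofFn] at *
    show (-1:ℤ)^(c+i) * (-1)^(c+(i+1)) = -1
    rw [← pow_add]
    apply Odd.neg_one_pow
    exact ⟨c + i, by ring⟩
  · intro x hx
    rw [List.mem_ofFn] at hx
    obtain ⟨t, rfl⟩ := hx
    simp [pow_ne_zero]

lemma listEq (n c : ℕ) :
    ((-1:ℤ)^c :: (List.ofFn fun j : Fin n => (-1:ℤ)^(c+(j:ℕ)+1)) ++ [(-1:ℤ)^(c+n+1)])
      = List.ofFn fun t : Fin (n+2) => (-1:ℤ)^(c+(t:ℕ)) := by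
  apply List.ext_getElem
  · simp
  · intro i h1 h2
    rw [List.getElem_ofFn]
    simp only [List.cons_append] at h1 ⊢
    rcases i with _ | j
    · simp
    · rw [List.getElem_cons_succ]
      have hlen : (List.ofFn fun j : Fin n => (-1:ℤ)^(c+(j:ℕ)+1)).length = n := by simp
      simp only [List.length_ofFn] at h2
      rcases Nat.lt_or_ge j n with hj | hj
      · rw [List.getElem_append_left (by omega), List.getElem_ofFn]
        ring_nf
      · have hjn : j = n := by omega
        subst hjn
        rw [List.getElem_append_right (by omega)]
        simp
        ring_nf

lemma altVec_pow {n : ℕ} (c : Fin n) : altVec n c = (-1:ℤ)^(c:ℕ) := by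
  by_cases h : Even (c:ℕ)
  · simp [altVec, h, h.neg_one_pow]
  · simp [altVec, h, (Nat.not_even_iff_odd.mp h).neg_one_pow]

theorem stmt14 {n : ℕ} (hn : Odd n) :
    IsGASM (altVec n) (altVec n) (altVec n) (altVec n)
      (Matrix.of fun i j : Fin n => (-1 : ℤ) ^ ((i : ℕ) + (j : ℕ) + 1)) ∧
    ∀ i j : Fin n, (-1 : ℤ) ^ ((i : ℕ) + (j : ℕ) + 1) ≠ 0 := by
  have key : ∀ c : Fin n,
      AltList (altVec n c :: (List.ofFn fun t : Fin n => (-1:ℤ)^((c:ℕ)+(t:ℕ)+1))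
        ++ [altVec n c]) := by
    intro c
    have h1 : altVec n c = (-1:ℤ)^(c:ℕ) := altVec_pow c
    have h3 : ((-1:ℤ))^((c:ℕ)+n+1) = (-1:ℤ)^(c:ℕ) := by
      rw [show (c:ℕ)+n+1 = (c:ℕ)+(n+1) from by ring, pow_add,
        Even.neg_one_pow hn.add_one, mul_one]
    have heq : (altVec n c :: (List.ofFn fun t : Fin n => (-1:ℤ)^((c:ℕ)+(t:ℕ)+1))
        ++ [altVec n c])
        = ((-1:ℤ)^(c:ℕ) :: (List.ofFn fun t : Fin n => (-1:ℤ)^((c:ℕ)+(t:ℕ)+1))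
          ++ [(-1:ℤ)^((c:ℕ)+n+1)]) := by
      rw [h1, h3]
    rw [heq, listEq]
    exact altOfFn _ _
  refine ⟨⟨?_, ?_, ?_⟩, ?_⟩
  · intro i j
    right
    rcases Nat.even_or_odd ((i:ℕ)+(j:ℕ)+1) with h | h
    · left; simpa using h.neg_one_pow
    · right; simpa using h.neg_one_pow
  · intro i
    simpa only [Matrix.of_apply] using key i
  · intro j
    simp only [Matrix.of_apply]
    have he : (fun i : Fin n => (-1:ℤ)^((i:ℕ)+(j:ℕ)+1))
        = fun i : Fin n => (-1:ℤ)^((j:ℕ)+(i:ℕ)+1) := by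
      funext i; rw [Nat.add_comm (i:ℕ) (j:ℕ)]
    rw [he]
    exact key j
  · intro i j
    exact pow_ne_zero _ (by norm_num)
end

section
/- Let n be odd and u = u' = v = v' = (+1,−1,+1,…,−1,+1). Then every (u,u'|v,v')-ASM has at least n nonzero entries, and there exists a (u,u'|v,v')-ASM with exactly n nonzero entries (in the positions of a permutation matrix). -/
lemma filter_ofFn_single {n : ℕ} (i : Fin n) (c : ℤ) (hc : c ≠ 0) :
    (List.ofFn fun j => if i = j then c else 0).filter (· ≠ 0) = [c] := by
  rw [List.ofFn_eq_map, List.filter_map]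
  have h1 : ((List.finRange n).filter ((fun x => decide (x ≠ 0)) ∘ fun j => if i = j then c else 0)) = [i] := by
    have heq := List.filter_congr (l := List.finRange n)
      (p := (fun x => decide (x ≠ 0)) ∘ fun j => if i = j then c else 0)
      (q := fun j => j == i)
      (fun j _ => by
        simp only [Function.comp_apply]
        by_cases h : i = j
        · subst h; simp [hc]
        · simp [h, Ne.symm h])
    rw [heq, List.filter_beq]
    rw [List.count_eq_one_of_mem (List.nodup_finRange n) (List.mem_finRange i)]; rfl
  rw [h1]; simp

lemma altVec_sq {n : ℕ} (j : Fin n) : altVec n j * altVec n j = 1 := by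
  unfold altVec; split_ifs <;> ring

lemma altVec_ne_zero {n : ℕ} (j : Fin n) : altVec n j ≠ 0 := by
  unfold altVec; split_ifs <;> decide

theorem stmt15 {n : ℕ} (hn : Odd n) :
    (∀ A : Matrix (Fin n) (Fin n) ℤ,
      IsGASM (altVec n) (altVec n) (altVec n) (altVec n) A →
      n ≤ (Finset.univ.filter fun p : Fin n × Fin n => A p.1 p.2 ≠ 0).card) ∧
    (∃ A : Matrix (Fin n) (Fin n) ℤ,
      IsGASM (altVec n) (altVec n) (altVec n) (altVec n) A ∧
      (Finset.univ.filter fun p : Fin n × Fin n => A p.1 p.2 ≠ 0).card = n ∧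
      ∃ σ : Equiv.Perm (Fin n), ∀ i j : Fin n, A i j ≠ 0 ↔ j = σ i) := by
  constructor
  · intro A hA
    have hcol : ∀ j : Fin n, ∃ i, A i j ≠ 0 := by
      intro j
      by_contra h
      push_neg at h
      have halt := hA.2.2 j
      unfold AltList at halt
      have hz : (List.ofFn fun i => A i j).filter (· ≠ 0) = [] := by
        rw [List.filter_eq_nil_iff]
        intro a ha
        rw [List.mem_ofFn] at ha
        obtain ⟨i, hi⟩ := ha
        simp [← hi, h i]
      rw [List.cons_append, List.filter_cons, List.filter_append, hz] at halt
      simp only [List.nil_append, List.filter_cons, List.filter_nil] at halt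
      have hne : altVec n j ≠ 0 := altVec_ne_zero j
      simp only [hne, ne_eq, not_false_iff, if_true] at halt
      have := (List.isChain_pair (R := fun x y : ℤ => x * y = -1) (x := altVec n j) (y := altVec n j)).mp halt
      rw [altVec_sq] at this
      exact absurd this (by decide)
    choose f hf using hcol
    have hle : (Finset.univ : Finset (Fin n)).card ≤
        (Finset.univ.filter fun p : Fin n × Fin n => A p.1 p.2 ≠ 0).card := by
      apply Finset.card_le_card_of_injOn (fun j => (f j, j))
      · intro j _; simp [hf j]
      · intro a _ b _ h; exact congrArg Prod.snd h
    simpa using hle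
  · refine ⟨fun i j => if i = j then -altVec n i else 0, ⟨?_, ?_, ?_⟩, ?_, ⟨Equiv.refl _, ?_⟩⟩
    · intro i j
      by_cases h : i = j
      · simp only [h, if_true]
        rcases (show altVec n j = 1 ∨ altVec n j = -1 by unfold altVec; split_ifs <;> simp) with h1 | h1 <;>
          simp [h1]
      · simp [h]
    · intro i
      unfold AltList
      rw [List.cons_append, List.filter_cons, List.filter_append,
        filter_ofFn_single i (-altVec n i) (by simpa using altVec_ne_zero i)]
      have hne : altVec n i ≠ 0 := altVec_ne_zero i
      simp only [List.filter_cons, List.filter_nil, hne, ne_eq, not_false_iff,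
        if_true]
      refine List.isChain_cons_cons.mpr ⟨by rw [mul_neg, altVec_sq], ?_⟩
      exact List.isChain_pair.mpr (by rw [neg_mul, altVec_sq])
    · intro j
      have hcol : (List.ofFn fun i => if i = j then -altVec n i else 0)
          = List.ofFn fun i => if j = i then -altVec n j else 0 := by
        congr 1
        funext i
        by_cases h : i = j
        · subst h; simp
        · simp [h, Ne.symm h]
      unfold AltList
      rw [hcol, List.cons_append, List.filter_cons, List.filter_append,
        filter_ofFn_single j (-altVec n j) (by simpa using altVec_ne_zero j)]
      have hne : altVec n j ≠ 0 := altVec_ne_zero j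
      simp only [List.filter_cons, List.filter_nil, hne, ne_eq, not_false_iff,
        if_true]
      refine List.isChain_cons_cons.mpr ⟨by rw [mul_neg, altVec_sq], ?_⟩
      exact List.isChain_pair.mpr (by rw [neg_mul, altVec_sq])
    · have hset : (Finset.univ.filter fun p : Fin n × Fin n =>
          (if p.1 = p.2 then -altVec n p.1 else 0) ≠ 0)
          = Finset.univ.image (fun i : Fin n => (i, i)) := by
        ext p
        simp only [Finset.mem_filter, Finset.mem_univ, true_and, Finset.mem_image]
        constructor
        · intro hp
          by_cases h : p.1 = p.2
          · exact ⟨p.1, by simp [Prod.ext_iff, h]⟩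
          · simp [h] at hp
        · rintro ⟨i, rfl⟩
          simp [altVec_ne_zero i]
      rw [hset, Finset.card_image_of_injective _ (fun a b h => (Prod.ext_iff.mp h).1)]
      simp
    · intro i j
      by_cases h : i = j
      · subst h; simp [altVec_ne_zero i]
      · simp [h, Ne.symm h]
end
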